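/- arXiv:2109.04055 — 8 statements merged into one kernel-verified Lean document; each statement's English description precedes it below -/
import Mathlib

section
/- For any equivalence relation R on ℕ, the function f(x) = the least y ≤ x with y R x is a reduction of R to R_{complement of T_R}, where T_R = {y ≠ 0 : ∀ x < y, ¬(x R y)} is the principal transversal; consequently if R is a primitive recursive equivalence relation with domain ℕ, then R is pr-bireducible with R_{complement of T_R}. -/
/-- The equivalence relation `R_X`: `x R_X y` iff both in `X` or `x = y`. -/
def REq (X : Set ℕ) (x y : ℕ) : Prop := (x ∈ X ∧ y ∈ X) ∨ x = y

/-- Primitive recursive reducibility between binary relations on ℕ. -/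
def PrRed (R S : ℕ → ℕ → Prop) : Prop :=
  ∃ f : ℕ → ℕ, Primrec f ∧ ∀ x y, R x y ↔ S (f x) (f y)

/-- pr-bireducibility. -/
def PrEquiv (R S : ℕ → ℕ → Prop) : Prop := PrRed R S ∧ PrRed S R

/-- `X` is a primitive recursive set. -/
def PRSet (X : Set ℕ) : Prop :=
  ∃ f : ℕ → Bool, Primrec f ∧ ∀ n, n ∈ X ↔ f n = true

/-- `#(0^X)[s]`: the number of elements of the complement of `X` that are `≤ s`. -/
noncomputable def zc (X : Set ℕ) (s : ℕ) : ℕ := {k | k ≤ s ∧ k ∉ X}.ncard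

/-- The principal transversal of `R`. -/
def princT (R : ℕ → ℕ → Prop) : Set ℕ := {y | y ≠ 0 ∧ ∀ x < y, ¬ R x y}

private lemma mem_self {R : ℕ → ℕ → Prop} (hR : Equivalence R) (x : ℕ) :
    x ∈ {z | R z x} := hR.refl x

private lemma R_sInf {R : ℕ → ℕ → Prop} (hR : Equivalence R) (x : ℕ) :
    R (sInf {z | R z x}) x :=
  Nat.sInf_mem ⟨x, mem_self hR x⟩

private lemma sInf_eq_of_R {R : ℕ → ℕ → Prop} (hR : Equivalence R) {x y : ℕ} (h : R x y) :
    sInf {z | R z x} = sInf {z | R z y} := by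
  have : {z | R z x} = {z | R z y} := by
    ext z
    exact ⟨fun hz => hR.trans hz h, fun hz => hR.trans hz (hR.symm h)⟩
  rw [this]

private lemma sInf_min {R : ℕ → ℕ → Prop} (hR : Equivalence R) {x w : ℕ}
    (hw : w < sInf {z | R z x}) : ¬ R w (sInf {z | R z x}) := by
  intro hwr
  have := Nat.sInf_le (show w ∈ {z | R z x} from hR.trans hwr (R_sInf hR x))
  omega

private lemma sInf_compl_iff {R : ℕ → ℕ → Prop} (hR : Equivalence R) (x : ℕ) :
    sInf {z | R z x} ∈ (princT R)ᶜ ↔ sInf {z | R z x} = 0 := by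
  constructor
  · intro h
    by_contra h0
    exact h ⟨h0, fun w hw => sInf_min hR hw⟩
  · intro h hmem
    exact hmem.1 h

private lemma key {R : ℕ → ℕ → Prop} (hR : Equivalence R) (x y : ℕ) :
    R x y ↔ REq ((princT R)ᶜ) (sInf {z | R z x}) (sInf {z | R z y}) := by
  constructor
  · intro h
    exact Or.inr (sInf_eq_of_R hR h)
  · rintro (⟨hx, hy⟩ | h)
    · rw [sInf_compl_iff hR] at hx hy
      have h1 := R_sInf hR x
      have h2 := R_sInf hR y
      rw [hx] at h1; rw [hy] at h2
      exact hR.trans (hR.symm h1) h2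
    · have h1 := R_sInf hR x
      have h2 := R_sInf hR y
      rw [h] at h1
      exact hR.trans (hR.symm h1) h2

private lemma mem_princT_iff {R : ℕ → ℕ → Prop} (hR : Equivalence R) (x : ℕ) :
    x ∈ princT R ↔ sInf {z | R z x} = x ∧ x ≠ 0 := by
  constructor
  · rintro ⟨h0, hmin⟩
    refine ⟨le_antisymm (Nat.sInf_le (mem_self hR x)) ?_, h0⟩
    by_contra hlt
    push_neg at hlt
    exact hmin _ hlt (R_sInf hR x)
  · rintro ⟨heq, h0⟩
    refine ⟨h0, fun z hz hzr => ?_⟩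
    have := Nat.sInf_le (show z ∈ {w | R w x} from hzr)
    omega

theorem stmt_0 (R : ℕ → ℕ → Prop) (hR : Equivalence R) :
    (∀ x y, R x y ↔ REq ((princT R)ᶜ) (sInf {z | R z x}) (sInf {z | R z y})) ∧
    ((∃ g : ℕ → ℕ → Bool, Primrec₂ g ∧ ∀ x y, R x y ↔ g x y = true) →
      PrEquiv R (REq ((princT R)ᶜ))) := by
  refine ⟨key hR, ?_⟩
  rintro ⟨g, hg, hgs⟩
  -- the primrec function computing `sInf {z | R z x}`
  set p : ℕ → ℕ → Prop := fun x k => g (x - k) x = true with hp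
  have hprel : PrimrecRel p := by
    have : Primrec₂ fun x k => g (x - k) x :=
      hg.comp (Primrec.nat_sub.comp Primrec.fst Primrec.snd) Primrec.fst
    exact Primrec₂.primrecRel (R := fun x k => g (x - k) x = true) (this.of_eq fun x k => by simp)
  set F : ℕ → ℕ := fun x => x - Nat.findGreatest (p x) x with hFdef
  have hF : Primrec F :=
    Primrec.nat_sub.comp Primrec.id (Primrec.nat_findGreatest Primrec.id hprel)
  have hFval : ∀ x, F x = sInf {z | R z x} := by
    intro x
    set m := sInf {z | R z x} with hm
    have hmx : R m x := R_sInf hR x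
    have hmle : m ≤ x := Nat.sInf_le (mem_self hR x)
    have hwit : p x (x - m) := by
      show g (x - (x - m)) x = true
      rw [show x - (x - m) = m by omega]
      exact (hgs m x).1 hmx
    have h1 : x - m ≤ Nat.findGreatest (p x) x :=
      Nat.le_findGreatest (by omega) hwit
    have h2 : Nat.findGreatest (p x) x ≤ x := Nat.findGreatest_le x
    have hsp : p x (Nat.findGreatest (p x) x) :=
      Nat.findGreatest_spec (m := x - m) (by omega) hwit
    have h3 : m ≤ x - Nat.findGreatest (p x) x := Nat.sInf_le ((hgs _ _).2 hsp)
    simp only [hFdef]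
    omega
  constructor
  · exact ⟨F, hF, fun x y => by rw [hFval x, hFval y]; exact key hR x y⟩
  · -- reduction back: send transversal elements to themselves, others to 0
    set c : ℕ → Prop := fun x => F x = x ∧ x ≠ 0 with hc
    have hcp : PrimrecPred c := by
      have h1 : PrimrecPred fun x => F x = x :=
        PrimrecRel.comp Primrec.eq hF Primrec.id
      have h2 : PrimrecPred fun x : ℕ => x ≠ 0 :=
        (PrimrecRel.comp Primrec.eq Primrec.id (Primrec.const 0)).not
      exact h1.and h2
    set h : ℕ → ℕ := fun x => if c x then x else 0 with hhdef
    have hh : Primrec h := Primrec.ite hcp Primrec.id (Primrec.const 0)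
    have hciff : ∀ x, c x ↔ x ∈ princT R := by
      intro x
      rw [mem_princT_iff hR, ← hFval x]
    refine ⟨h, hh, fun x y => ?_⟩
    constructor
    · rintro (⟨hx, hy⟩ | rfl)
      · have hx' : ¬ c x := fun hc' => hx ((hciff x).1 hc')
        have hy' : ¬ c y := fun hc' => hy ((hciff y).1 hc')
        simp only [hhdef, if_neg hx', if_neg hy']
        exact hR.refl 0
      · exact hR.refl _
    · intro hRh
      by_cases hx : c x <;> by_cases hy : c y
      · simp only [hhdef, if_pos hx, if_pos hy] at hRh
        right
        rcases lt_trichotomy x y with hlt | heq | hgt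
        · exact absurd hRh (((hciff y).1 hy).2 x hlt)
        · exact heq
        · exact absurd (hR.symm hRh) (((hciff x).1 hx).2 y hgt)
      · exfalso
        simp only [hhdef, if_pos hx, if_neg hy] at hRh
        rcases Nat.eq_zero_or_pos x with h0 | h0
        · exact hx.2 h0
        · exact ((hciff x).1 hx).2 0 h0 (hR.symm hRh)
      · exfalso
        simp only [hhdef, if_neg hx, if_pos hy] at hRh
        rcases Nat.eq_zero_or_pos y with h0 | h0
        · exact hy.2 h0
        · exact ((hciff y).1 hy).2 0 h0 hRh
      · left
        exact ⟨fun h' => hx ((hciff x).2 h'), fun h' => hy ((hciff y).2 h')⟩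
end

section
/- For any set X ⊆ ℕ with infinite complement, Id ≤_pr R_X if and only if the complement of X is not primitive recursively immune, i.e., if and only if the complement of X contains the range of an injective primitive recursive function. -/
theorem stmt_3 (X : Set ℕ) (h : Xᶜ.Infinite) :
    PrRed (fun a b : ℕ => a = b) (REq X) ↔
      ∃ f : ℕ → ℕ, Primrec f ∧ Function.Injective f ∧ Set.range f ⊆ Xᶜ := by
  constructor
  · rintro ⟨f, hfpr, hf⟩
    have hinj : Function.Injective f := by
      intro x y hxy
      exact (hf x y).2 (Or.inr hxy)
    by_cases hex : ∃ a, f a ∈ X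
    · obtain ⟨a₀, ha₀⟩ := hex
      have huniq : ∀ a, f a ∈ X → a = a₀ := fun a ha =>
        (hf a a₀).2 (Or.inl ⟨ha, ha₀⟩)
      refine ⟨fun n => f (if a₀ ≤ n then n + 1 else n), ?_, ?_, ?_⟩
      · exact hfpr.comp ((Primrec.ite
          ((Primrec.nat_le).comp (Primrec.const a₀) Primrec.id)
          Primrec.succ Primrec.id))
      · intro x y hxy
        have := hinj hxy
        split_ifs at this with h1 h2 h2 <;> omega
      · rintro _ ⟨n, rfl⟩
        intro hmem
        have := huniq _ hmem
        split_ifs at this <;> omega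
    · push_neg at hex
      exact ⟨f, hfpr, hinj, by rintro _ ⟨n, rfl⟩; exact hex n⟩
  · rintro ⟨f, hfpr, hinj, hrange⟩
    refine ⟨f, hfpr, fun x y => ⟨?_, ?_⟩⟩
    · rintro rfl; exact Or.inr rfl
    · rintro (⟨hx, _⟩ | heq)
      · exact absurd hx (hrange ⟨x, rfl⟩)
      · exact hinj heq
end

section
/- There exists a primitive recursive set Y ⊆ ℕ whose complement is infinite and primitive recursively immune, i.e., the complement of Y contains no infinite set which is the range of an injective primitive recursive function. -/
open Nat

namespace Stmt4Aux

/-! ### Encoding of Ackermann computation tables -/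

/-- code of a triple `(a, b, v)` meaning `ack a b = v`. -/
def tc (a b v : ℕ) : ℕ := Nat.pair a (Nat.pair b v)

lemma testBit_le {h j : ℕ} (H : h.testBit j = true) : j ≤ h :=
  le_trans (le_of_lt (Nat.lt_two_pow_self (n := j))) (Nat.ge_two_pow_of_testBit H)

lemma v_le_tc (a b v : ℕ) : v ≤ tc a b v :=
  le_trans (Nat.right_le_pair b v) (Nat.right_le_pair a _)

lemma a_le_tc (a b v : ℕ) : a ≤ tc a b v := Nat.left_le_pair _ _

/-- local correctness of a bit of the table `h`. -/
def locb (h j : ℕ) : Bool :=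
  if j.unpair.1 = 0 then decide (j.unpair.2.unpair.2 = j.unpair.2.unpair.1 + 1)
  else if j.unpair.2.unpair.1 = 0 then
    h.testBit (tc (j.unpair.1 - 1) 1 j.unpair.2.unpair.2)
  else
    (List.range (h+1)).any fun d =>
      h.testBit (tc j.unpair.1 (j.unpair.2.unpair.1 - 1) d) &&
      h.testBit (tc (j.unpair.1 - 1) d j.unpair.2.unpair.2)

lemma locb_zero (h b v : ℕ) : locb h (tc 0 b v) = decide (v = b + 1) := by
  simp [locb, tc]

lemma locb_succ_zero (h a v : ℕ) : locb h (tc (a+1) 0 v) = h.testBit (tc a 1 v) := by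
  simp [locb, tc]

lemma locb_succ_succ (h a b v : ℕ) :
    locb h (tc (a+1) (b+1) v) = ((List.range (h+1)).any fun d =>
      h.testBit (tc (a+1) b d) && h.testBit (tc a d v)) := by
  simp [locb, tc]

/-- `h` is a good table: every bit set in it is locally correct. -/
def Good (h : ℕ) : Prop := ∀ j, h.testBit j = true → locb h j = true

def goodb (h : ℕ) : Bool := (List.range (h+1)).all fun j => !h.testBit j || locb h j

lemma goodb_iff {h : ℕ} : goodb h = true ↔ Good h := by
  constructor
  · intro H j hj
    have hjh : j < h + 1 := Nat.lt_succ_of_le (testBit_le hj)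
    have := (List.all_eq_true.mp H) j (List.mem_range.mpr hjh)
    simpa [hj] using this
  · intro H
    apply List.all_eq_true.mpr
    intro j _
    cases hj : h.testBit j
    · simp
    · simpa using H j hj

/-- soundness: bits of a good table record true facts about `ack`. -/
lemma Good.sound {h : ℕ} (G : Good h) :
    ∀ a b v, h.testBit (tc a b v) = true → v = ack a b := by
  intro a
  induction a with
  | zero =>
    intro b v hb
    have := G _ hb
    rw [locb_zero] at this
    simpa [ack_zero] using of_decide_eq_true this
  | succ a iha =>
    intro b
    induction b with
    | zero =>
      intro v hb
      have := G _ hb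
      rw [locb_succ_zero] at this
      rw [ack_succ_zero]
      exact iha 1 v this
    | succ b ihb =>
      intro v hb
      have := G _ hb
      rw [locb_succ_succ] at this
      obtain ⟨d, -, hd⟩ := List.any_eq_true.mp this
      rw [Bool.and_eq_true] at hd
      have h1 := ihb d hd.1
      have h2 := iha d v hd.2
      rw [ack_succ_succ, ← h1, h2]

end Stmt4Aux

namespace Stmt4Aux

/-- a canonical good table verifying `ack a b`. -/
def TT : ℕ → ℕ → ℕ
  | 0, b => 2 ^ tc 0 b (b + 1)
  | a+1, 0 => 2 ^ tc (a+1) 0 (ack a 1) ||| TT a 1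
  | a+1, b+1 => 2 ^ tc (a+1) (b+1) (ack a (ack (a+1) b)) |||
      (TT (a+1) b ||| TT a (ack (a+1) b))

/-- bit inclusion. -/
def Sub (x y : ℕ) : Prop := ∀ j, x.testBit j = true → y.testBit j = true

lemma sub_lor_left (x y : ℕ) : Sub x (x ||| y) := fun j hj => by
  simp [Nat.testBit_lor, hj]

lemma sub_lor_right (x y : ℕ) : Sub y (x ||| y) := fun j hj => by
  simp [Nat.testBit_lor, hj]

lemma Sub.trans {x y z : ℕ} (h1 : Sub x y) (h2 : Sub y z) : Sub x z :=
  fun j hj => h2 j (h1 j hj)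

lemma locb_mono {x y j : ℕ} (hs : Sub x y) (hl : locb x j = true) : locb y j = true := by
  obtain ⟨a, w, rfl⟩ : ∃ a w, j = Nat.pair a w := ⟨_, _, (Nat.pair_unpair j).symm⟩
  obtain ⟨b, v, rfl⟩ : ∃ b v, w = Nat.pair b v := ⟨_, _, (Nat.pair_unpair w).symm⟩
  replace hl : locb x (tc a b v) = true := hl
  show locb y (tc a b v) = true
  rcases a with - | a
  · rwa [locb_zero] at hl ⊢
  · rcases b with - | b
    · rw [locb_succ_zero] at hl ⊢
      exact hs _ hl
    · rw [locb_succ_succ] at hl ⊢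
      obtain ⟨d, -, hd⟩ := List.any_eq_true.mp hl
      rw [Bool.and_eq_true] at hd
      have h1 := hs _ hd.1
      have h2 := hs _ hd.2
      apply List.any_eq_true.mpr
      refine ⟨d, List.mem_range.mpr (Nat.lt_succ_of_le ?_), by simp [h1, h2]⟩
      exact le_trans (v_le_tc _ _ _) (testBit_le h1)

lemma Good.lor {x y : ℕ} (hx : Good x) (hy : Good y) : Good (x ||| y) := by
  intro j hj
  rw [Nat.testBit_lor, Bool.or_eq_true] at hj
  rcases hj with hj | hj
  · exact locb_mono (sub_lor_left x y) (hx j hj)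
  · exact locb_mono (sub_lor_right x y) (hy j hj)

lemma good_cons {j0 rest : ℕ} (Grest : Good rest)
    (Hloc : locb (2 ^ j0 ||| rest) j0 = true) : Good (2 ^ j0 ||| rest) := by
  intro j hj
  rw [Nat.testBit_lor, Bool.or_eq_true] at hj
  rcases hj with hj | hj
  · rw [Nat.testBit_two_pow] at hj
    rcases of_decide_eq_true hj with rfl
    exact Hloc
  · exact locb_mono (sub_lor_right _ _) (Grest j hj)

lemma TT_good : ∀ a b, Good (TT a b) ∧ (TT a b).testBit (tc a b (ack a b)) = true := by
  intro a
  induction a with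
  | zero =>
    intro b
    constructor
    · intro j hj
      rw [TT, Nat.testBit_two_pow] at hj
      rcases of_decide_eq_true hj with rfl
      rw [TT, locb_zero]
      simp [ack_zero]
    · simp [TT, ack_zero, Nat.testBit_two_pow]
  | succ a iha =>
    intro b
    induction b with
    | zero =>
      obtain ⟨G1, M1⟩ := iha 1
      rw [TT]
      constructor
      · apply good_cons G1
        rw [locb_succ_zero]
        exact sub_lor_right _ _ _ M1
      · rw [ack_succ_zero, Nat.testBit_lor, Nat.testBit_two_pow_self]
        simp
    | succ b ihb =>
      obtain ⟨G1, M1⟩ := ihb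
      obtain ⟨G2, M2⟩ := iha (ack (a+1) b)
      rw [TT]
      constructor
      · apply good_cons (G1.lor G2)
        rw [locb_succ_succ]
        apply List.any_eq_true.mpr
        have hb1 : (2 ^ tc (a+1) (b+1) (ack a (ack (a+1) b)) |||
            (TT (a+1) b ||| TT a (ack (a+1) b))).testBit
              (tc (a+1) b (ack (a+1) b)) = true :=
          ((sub_lor_left _ _).trans (sub_lor_right _ _)) _ M1
        have hb2 : (2 ^ tc (a+1) (b+1) (ack a (ack (a+1) b)) |||
            (TT (a+1) b ||| TT a (ack (a+1) b))).testBit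
              (tc a (ack (a+1) b) (ack a (ack (a+1) b))) = true :=
          ((sub_lor_right _ _).trans (sub_lor_right _ _)) _ M2
        refine ⟨ack (a+1) b, List.mem_range.mpr (Nat.lt_succ_of_le ?_), by simp [hb1, hb2]⟩
        exact le_trans (v_le_tc _ _ _) (testBit_le hb1)
      · rw [ack_succ_succ, Nat.testBit_lor, Nat.testBit_two_pow_self]
        simp

end Stmt4Aux

namespace Stmt4Aux

def rootb (n h : ℕ) : Bool := (List.range (h+1)).any fun v => h.testBit (tc n n v)

lemma rootb_iff {n h : ℕ} : rootb n h = true ↔ ∃ v, h.testBit (tc n n v) = true := by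
  constructor
  · intro H
    obtain ⟨v, -, hv⟩ := List.any_eq_true.mp H
    exact ⟨v, hv⟩
  · rintro ⟨v, hv⟩
    apply List.any_eq_true.mpr
    refine ⟨v, List.mem_range.mpr (Nat.lt_succ_of_le ?_), hv⟩
    exact le_trans (v_le_tc _ _ _) (testBit_le hv)

def Qb (n h : ℕ) : Bool := goodb h && rootb n h

def memb (h : ℕ) : Bool :=
  (List.range (h+1)).any fun n => Qb n h && (List.range h).all fun h' => !Qb n h'

lemma n_le_of_Qb {n h : ℕ} (H : Qb n h = true) : n ≤ h := by
  rw [Qb, Bool.and_eq_true] at H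
  obtain ⟨v, hv⟩ := rootb_iff.mp H.2
  exact le_trans (a_le_tc _ _ _) (testBit_le hv)

lemma memb_iff {h : ℕ} :
    memb h = true ↔ ∃ n, Qb n h = true ∧ ∀ h' < h, Qb n h' = false := by
  constructor
  · intro H
    obtain ⟨n, -, hn⟩ := List.any_eq_true.mp H
    rw [Bool.and_eq_true] at hn
    refine ⟨n, hn.1, fun h' hh' => ?_⟩
    have := (List.all_eq_true.mp hn.2) h' (List.mem_range.mpr hh')
    simpa using this
  · rintro ⟨n, h1, h2⟩
    apply List.any_eq_true.mpr
    refine ⟨n, List.mem_range.mpr (Nat.lt_succ_of_le (n_le_of_Qb h1)), ?_⟩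
    rw [Bool.and_eq_true]
    refine ⟨h1, List.all_eq_true.mpr fun h' hh' => ?_⟩
    simp [h2 h' (List.mem_range.mp hh')]

lemma exQ (n : ℕ) : ∃ h, Qb n h = true := by
  refine ⟨TT n n, ?_⟩
  obtain ⟨G, M⟩ := TT_good n n
  rw [Qb, Bool.and_eq_true]
  exact ⟨goodb_iff.mpr G, rootb_iff.mpr ⟨ack n n, M⟩⟩

/-- the minimal good rooted table for `n`. -/
def hfun (n : ℕ) : ℕ := Nat.find (exQ n)

lemma memb_iff' {h : ℕ} : memb h = true ↔ ∃ n, hfun n = h := by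
  rw [memb_iff]
  constructor
  · rintro ⟨n, h1, h2⟩
    refine ⟨n, (Nat.find_eq_iff (exQ n)).mpr ⟨h1, fun m hm => ?_⟩⟩
    simp [h2 m hm]
  · rintro ⟨n, rfl⟩
    refine ⟨n, Nat.find_spec (exQ n), fun h' hh' => ?_⟩
    have := Nat.find_min (exQ n) hh'
    simpa using this

lemma ack_le_of_Q {n h : ℕ} (H : Qb n h = true) : ack n n ≤ h := by
  rw [Qb, Bool.and_eq_true] at H
  obtain ⟨v, hv⟩ := rootb_iff.mp H.2
  have hs := (goodb_iff.mp H.1).sound n n v hv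
  subst hs
  exact le_trans (v_le_tc _ _ _) (testBit_le hv)

lemma ack_le_hfun (n : ℕ) : ack n n ≤ hfun n :=
  ack_le_of_Q (Nat.find_spec (exQ n))

end Stmt4Aux

namespace Stmt4Aux

open Primrec

variable {α : Type*} [Primcodable α]

private lemma any_eq_foldr (q : ℕ → Bool) (l : List ℕ) :
    l.any q = l.foldr (fun b s => q b || s) false := by
  induction l with
  | nil => rfl
  | cons x l ih => simp [List.any_cons, ih]

private lemma all_eq_foldr (q : ℕ → Bool) (l : List ℕ) :
    l.all q = l.foldr (fun b s => q b && s) true := by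
  induction l with
  | nil => rfl
  | cons x l ih => simp [List.all_cons, ih]

lemma primrec_anyRange {f : α → ℕ} {p : α → ℕ → Bool}
    (hf : Primrec f) (hp : Primrec₂ p) :
    Primrec fun a => (List.range (f a)).any (p a) := by
  have : Primrec fun a => (List.range (f a)).foldr (fun b s => p a b || s) false :=
    Primrec.list_foldr (Primrec.list_range.comp hf) (Primrec.const false)
      ((Primrec.or.comp (hp.comp Primrec.fst (Primrec.fst.comp Primrec.snd))
        (Primrec.snd.comp Primrec.snd)).to₂)
  exact this.of_eq fun a => (any_eq_foldr _ _).symm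

lemma primrec_allRange {f : α → ℕ} {p : α → ℕ → Bool}
    (hf : Primrec f) (hp : Primrec₂ p) :
    Primrec fun a => (List.range (f a)).all (p a) := by
  have : Primrec fun a => (List.range (f a)).foldr (fun b s => p a b && s) true :=
    Primrec.list_foldr (Primrec.list_range.comp hf) (Primrec.const true)
      ((Primrec.and.comp (hp.comp Primrec.fst (Primrec.fst.comp Primrec.snd))
        (Primrec.snd.comp Primrec.snd)).to₂)
  exact this.of_eq fun a => (all_eq_foldr _ _).symm

lemma primrec_pow : Primrec₂ (fun a b : ℕ => a ^ b) :=
  Primrec₂.unpaired'.mp Nat.Primrec.pow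

lemma primrec_testBit : Primrec₂ Nat.testBit := by
  have : Primrec₂ fun x i : ℕ => decide (x / 2 ^ i % 2 = 1) :=
    PrimrecPred.decide (Primrec.eq.comp
      (Primrec.nat_mod.comp
        (Primrec.nat_div.comp Primrec.fst
          (primrec_pow.comp (Primrec.const 2) Primrec.snd))
        (Primrec.const 2))
      (Primrec.const 1))
  exact this.of_eq fun x i => Nat.testBit_eq_decide_div_mod_eq.symm

lemma primrec_tc {f g k : α → ℕ} (hf : Primrec f) (hg : Primrec g) (hk : Primrec k) :
    Primrec fun a => tc (f a) (g a) (k a) :=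
  Primrec₂.natPair.comp hf (Primrec₂.natPair.comp hg hk)

lemma primrec_locb : Primrec₂ locb := by
  -- domain ℕ × ℕ : (h, j)
  have ph : Primrec fun p : ℕ × ℕ => p.1 := Primrec.fst
  have pa : Primrec fun p : ℕ × ℕ => p.2.unpair.1 :=
    Primrec.fst.comp (Primrec.unpair.comp Primrec.snd)
  have pb : Primrec fun p : ℕ × ℕ => p.2.unpair.2.unpair.1 :=
    Primrec.fst.comp (Primrec.unpair.comp (Primrec.snd.comp (Primrec.unpair.comp Primrec.snd)))
  have pv : Primrec fun p : ℕ × ℕ => p.2.unpair.2.unpair.2 :=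
    Primrec.snd.comp (Primrec.unpair.comp (Primrec.snd.comp (Primrec.unpair.comp Primrec.snd)))
  have branch1 : Primrec fun p : ℕ × ℕ =>
      decide (p.2.unpair.2.unpair.2 = p.2.unpair.2.unpair.1 + 1) :=
    PrimrecPred.decide (Primrec.eq.comp pv (Primrec.succ.comp pb))
  have branch2 : Primrec fun p : ℕ × ℕ =>
      p.1.testBit (tc (p.2.unpair.1 - 1) 1 p.2.unpair.2.unpair.2) :=
    primrec_testBit.comp ph
      (primrec_tc (Primrec.nat_sub.comp pa (Primrec.const 1)) (Primrec.const 1) pv)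
  have branch3 : Primrec fun p : ℕ × ℕ =>
      (List.range (p.1+1)).any fun d =>
        p.1.testBit (tc p.2.unpair.1 (p.2.unpair.2.unpair.1 - 1) d) &&
        p.1.testBit (tc (p.2.unpair.1 - 1) d p.2.unpair.2.unpair.2) := by
    apply primrec_anyRange (Primrec.succ.comp ph)
    -- inner : domain (ℕ × ℕ) × ℕ
    have qh : Primrec fun q : (ℕ × ℕ) × ℕ => q.1.1 := Primrec.fst.comp Primrec.fst
    have qd : Primrec fun q : (ℕ × ℕ) × ℕ => q.2 := Primrec.snd
    have qa : Primrec fun q : (ℕ × ℕ) × ℕ => q.1.2.unpair.1 :=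
      pa.comp Primrec.fst
    have qb : Primrec fun q : (ℕ × ℕ) × ℕ => q.1.2.unpair.2.unpair.1 :=
      pb.comp Primrec.fst
    have qv : Primrec fun q : (ℕ × ℕ) × ℕ => q.1.2.unpair.2.unpair.2 :=
      pv.comp Primrec.fst
    exact Primrec.and.comp
      (primrec_testBit.comp qh
        (primrec_tc qa (Primrec.nat_sub.comp qb (Primrec.const 1)) qd))
      (primrec_testBit.comp qh
        (primrec_tc (Primrec.nat_sub.comp qa (Primrec.const 1)) qd qv))
  have c1 : PrimrecPred fun p : ℕ × ℕ => p.2.unpair.1 = 0 :=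
    Primrec.eq.comp pa (Primrec.const 0)
  have c2 : PrimrecPred fun p : ℕ × ℕ => p.2.unpair.2.unpair.1 = 0 :=
    Primrec.eq.comp pb (Primrec.const 0)
  exact Primrec.ite c1 branch1 (Primrec.ite c2 branch2 branch3)

lemma primrec_goodb : Primrec goodb := by
  apply primrec_allRange Primrec.succ
  exact (Primrec.or.comp
    (Primrec.not.comp (primrec_testBit.comp Primrec.fst Primrec.snd))
    (primrec_locb.comp Primrec.fst Primrec.snd)).to₂

lemma primrec_rootb : Primrec₂ rootb := by
  show Primrec fun p : ℕ × ℕ => (List.range (p.2+1)).any fun v => p.2.testBit (tc p.1 p.1 v)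
  apply primrec_anyRange (Primrec.succ.comp Primrec.snd)
  exact (primrec_testBit.comp (Primrec.snd.comp Primrec.fst)
    (primrec_tc (Primrec.fst.comp Primrec.fst) (Primrec.fst.comp Primrec.fst)
      Primrec.snd)).to₂

lemma primrec_Qb : Primrec₂ Qb :=
  (Primrec.and.comp (primrec_goodb.comp Primrec.snd)
    (primrec_rootb.comp Primrec.fst Primrec.snd)).to₂

lemma primrec_memb : Primrec memb := by
  apply primrec_anyRange Primrec.succ
  show Primrec fun p : ℕ × ℕ => Qb p.2 p.1 && (List.range p.1).all fun h' => !Qb p.2 h'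
  -- domain ℕ × ℕ : (h, n)
  apply Primrec.and.comp (primrec_Qb.comp Primrec.snd Primrec.fst)
  apply primrec_allRange Primrec.fst
  -- domain (ℕ × ℕ) × ℕ : ((h, n), h')
  exact (Primrec.not.comp
    (primrec_Qb.comp (Primrec.snd.comp Primrec.fst) Primrec.snd)).to₂

end Stmt4Aux

namespace Stmt4Aux

private lemma le_foldr_max {l : List ℕ} {x : ℕ} (hx : x ∈ l) : x ≤ l.foldr max 0 := by
  induction l with
  | nil => cases hx
  | cons y l ih =>
    rcases List.mem_cons.mp hx with rfl | hx
    · exact le_max_left _ _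
    · exact le_trans (ih hx) (le_max_right _ _)

theorem main :
    ∃ Y : Set ℕ, (∃ f : ℕ → Bool, Primrec f ∧ ∀ n, n ∈ Y ↔ f n = true) ∧ Yᶜ.Infinite ∧
      ∀ f : ℕ → ℕ, Primrec f → Function.Injective f → ¬ (Set.range f ⊆ Yᶜ) := by
  refine ⟨{h : ℕ | memb h = true}ᶜ, ?_, ?_, ?_⟩
  · refine ⟨fun n => !memb n, Primrec.not.comp primrec_memb, fun n => ?_⟩
    simp [Bool.not_eq_true']
  · rw [compl_compl]
    intro hfin
    obtain ⟨x, hx⟩ := hfin.bddAbove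
    have h1 : hfun x ∈ {h : ℕ | memb h = true} := memb_iff'.mpr ⟨x, rfl⟩
    have h2 := hx h1
    have h3 := ack_le_hfun x
    have h4 := lt_ack_left x x
    omega
  · intro f hf hinj hsub
    rw [compl_compl] at hsub
    have H : ∀ i : ℕ, ∃ n, Qb n (f i) = true ∧ ∀ h' < f i, Qb n h' = false :=
      fun i => memb_iff.mp (hsub ⟨i, rfl⟩)
    set ν : ℕ → ℕ := fun i => Nat.find (H i) with hν
    have hνf : ∀ i, hfun (ν i) = f i := by
      intro i
      obtain ⟨h1, h2⟩ := Nat.find_spec (H i)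
      exact (Nat.find_eq_iff (exQ (ν i))).mpr ⟨h1, fun m hm => by simp [hν, h2 m hm]⟩
    have hνinj : Function.Injective ν := by
      intro i j hij
      apply hinj
      rw [← hνf i, ← hνf j, hij]
    -- the max function
    set g : ℕ → ℕ := fun k => ((List.range (k+1)).map f).foldr max 0 with hg
    have hgP : Primrec g := by
      have hstep : Primrec fun k : ℕ => ((List.range (k+1)).map f).foldr
          (fun b s => max b s) 0 :=
        Primrec.list_foldr
          (Primrec.list_map (Primrec.list_range.comp Primrec.succ) (hf.comp Primrec.snd).to₂)
          (Primrec.const 0)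
          ((Primrec.nat_max.comp (Primrec.fst.comp Primrec.snd)
            (Primrec.snd.comp Primrec.snd)).to₂)
      exact hstep.of_eq fun k => rfl
    have hfg : ∀ i k, i < k + 1 → f i ≤ g k := by
      intro i k hik
      apply le_foldr_max
      exact List.mem_map.mpr ⟨i, List.mem_range.mpr hik, rfl⟩
    have hack : ∀ k, ack k k ≤ g k := by
      intro k
      have hcard : ((Finset.range (k+1)).image ν).card = k + 1 := by
        rw [Finset.card_image_of_injective _ hνinj, Finset.card_range]
      have hex : ∃ n ∈ (Finset.range (k+1)).image ν, k ≤ n := by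
        by_contra hc
        push_neg at hc
        have hsub2 : (Finset.range (k+1)).image ν ⊆ Finset.range k :=
          fun n hn => Finset.mem_range.mpr (hc n hn)
        have := Finset.card_le_card hsub2
        rw [hcard, Finset.card_range] at this
        omega
      obtain ⟨n, hn, hkn⟩ := hex
      obtain ⟨i, hi, rfl⟩ := Finset.mem_image.mp hn
      calc ack k k ≤ ack (ν i) (ν i) := ack_le_ack hkn hkn
        _ ≤ hfun (ν i) := ack_le_hfun _
        _ = f i := hνf i
        _ ≤ g k := hfg i k (Finset.mem_range.mp hi)
    obtain ⟨m, hm⟩ := exists_lt_ack_of_nat_primrec (Primrec.nat_iff.mp hgP)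
    exact absurd (hack m) (not_le.mpr (hm m))

end Stmt4Aux


theorem stmt_4 :
    ∃ Y : Set ℕ, PRSet Y ∧ Yᶜ.Infinite ∧
      ∀ f : ℕ → ℕ, Primrec f → Function.Injective f → ¬ (Set.range f ⊆ Yᶜ) := by
  obtain ⟨Y, h1, h2, h3⟩ := Stmt4Aux.main
  exact ⟨Y, h1, h2, h3⟩
end

section
/- There exists a primitive recursive equivalence relation R on ℕ with infinitely many classes such that R <_pr Id, i.e., R ≤_pr Id but Id is not ≤_pr R. -/
open Nat

/-- Capped Ackermann table: `ackCapped M a` is the list `[min (ack a b) M | b ∈ [0..M]]`. -/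
def ackCapped (M a : ℕ) : List ℕ :=
  Nat.rec ((List.range (M+1)).map fun b => min (b+1) M)
    (fun _ ih => (List.range (M+1)).map fun b =>
      Nat.rec (ih.getD (min 1 M) 0) (fun _ x => ih.getD (min x M) 0) b) a

lemma getD_map_range (f : ℕ → ℕ) {M b : ℕ} (h : b ≤ M) :
    (((List.range (M+1)).map f).getD b 0) = f b := by
  rw [List.getD_eq_getElem?_getD]
  simp [List.getElem?_map, List.getElem?_range (by omega : b < M+1)]

lemma min_ack_min (a t M : ℕ) : min (ack a (min t M)) M = min (ack a t) M := by
  rcases le_total t M with h | h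
  · rw [min_eq_left h]
  · rw [min_eq_right h, min_eq_right (lt_ack_right a M).le,
      min_eq_right (h.trans (lt_ack_right a t).le)]

lemma ackCapped_getD {M a b : ℕ} (h : b ≤ M) :
    (ackCapped M a).getD b 0 = min (ack a b) M := by
  induction a generalizing b with
  | zero => rw [show ackCapped M 0 = (List.range (M+1)).map fun b => min (b+1) M from rfl,
      getD_map_range _ h, ack_zero]
  | succ a IH =>
    rw [show ackCapped M (a+1) = (List.range (M+1)).map fun b =>
        Nat.rec ((ackCapped M a).getD (min 1 M) 0)
          (fun _ x => (ackCapped M a).getD (min x M) 0) b from rfl,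
      getD_map_range _ h]
    clear h
    induction b with
    | zero =>
      show (ackCapped M a).getD (min 1 M) 0 = _
      rw [IH (min_le_right _ _), min_ack_min, ack_succ_zero]
    | succ b IHb =>
      show (ackCapped M a).getD
          (min (Nat.rec ((ackCapped M a).getD (min 1 M) 0)
            (fun _ x => (ackCapped M a).getD (min x M) 0) b) M) 0 = _
      rw [IHb, IH (min_le_right _ _), min_ack_min, min_ack_min, ack_succ_succ]

theorem ackCapped_primrec : Primrec₂ ackCapped := by
  have base : Primrec (fun M => (List.range (M+1)).map fun b => min (b+1) M) :=
    Primrec.list_map (Primrec.list_range.comp Primrec.succ)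
      (Primrec.nat_min.comp₂ (Primrec.succ.comp₂ Primrec₂.right) Primrec₂.left)
  have inner : Primrec₂ fun (q : ℕ × (ℕ × List ℕ)) (b : ℕ) =>
      Nat.rec (motive := fun _ => ℕ) (q.2.2.getD (min 1 q.1) 0)
        (fun _ x => q.2.2.getD (min x q.1) 0) b := by
    refine Primrec.nat_rec
      (f := fun q : ℕ × (ℕ × List ℕ) => q.2.2.getD (min 1 q.1) 0)
      (g := fun q p => q.2.2.getD (min p.2 q.1) 0) ?_ ?_
    · exact (Primrec.list_getD 0).comp (Primrec.snd.comp Primrec.snd)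
        ((Primrec.nat_min.comp (Primrec.const 1) Primrec.fst))
    · exact (Primrec.list_getD 0).comp₂
        ((Primrec.snd.comp Primrec.snd).comp₂ Primrec₂.left)
        (Primrec.nat_min.comp₂ (Primrec.snd.comp₂ Primrec₂.right)
          (Primrec.fst.comp₂ Primrec₂.left))
  have step : Primrec₂ fun (M : ℕ) (p : ℕ × List ℕ) =>
      (List.range (M+1)).map fun b =>
        Nat.rec (motive := fun _ => ℕ) (p.2.getD (min 1 M) 0)
          (fun _ x => p.2.getD (min x M) 0) b := by
    exact Primrec.list_map
      ((Primrec.list_range.comp Primrec.succ).comp Primrec.fst) inner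
  exact (Primrec.nat_rec base step).of_eq fun M a => rfl

/-- Decides whether `m ∈ {ack n n | n}`. -/
def dFun (m : ℕ) : Bool :=
  Nat.rec false (fun n ih => ih || decide ((ackCapped (m+1) n).getD n 0 = m)) m

lemma dFun_aux (m K : ℕ) :
    (Nat.rec (motive := fun _ => Bool) false
      (fun n ih => ih || decide ((ackCapped (m+1) n).getD n 0 = m)) K) = true ↔
    ∃ n < K, (ackCapped (m+1) n).getD n 0 = m := by
  induction K with
  | zero => simp
  | succ K IH =>
    simp only [Bool.or_eq_true, IH, decide_eq_true_eq]
    constructor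
    · rintro (⟨n, hn, h⟩ | h)
      · exact ⟨n, by omega, h⟩
      · exact ⟨K, by omega, h⟩
    · rintro ⟨n, hn, h⟩
      rcases Nat.lt_or_ge n K with h' | h'
      · exact Or.inl ⟨n, h', h⟩
      · exact Or.inr (by rwa [show n = K by omega] at h)

lemma dFun_true {m : ℕ} : dFun m = true ↔ ∃ n, ack n n = m := by
  rw [dFun, dFun_aux]
  constructor
  · rintro ⟨n, hn, h⟩
    rw [ackCapped_getD (by omega)] at h
    refine ⟨n, ?_⟩
    rcases le_total (ack n n) (m+1) with h' | h'
    · rw [min_eq_left h'] at h; exact h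
    · rw [min_eq_right h'] at h; omega
  · rintro ⟨n, rfl⟩
    have hn : n < ack n n := lt_ack_left n n
    exact ⟨n, hn, by rw [ackCapped_getD (by omega)]; omega⟩

theorem dFun_primrec : Primrec dFun := by
  have h1 : Primrec fun (p : ℕ × (ℕ × Bool)) => (ackCapped (p.1+1) p.2.1).getD p.2.1 0 :=
    (Primrec.list_getD 0).comp
      (ackCapped_primrec.comp (Primrec.succ.comp Primrec.fst) (Primrec.fst.comp Primrec.snd))
      (Primrec.fst.comp Primrec.snd)
  have hstep : Primrec₂ fun (m : ℕ) (p : ℕ × Bool) =>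
      p.2 || decide ((ackCapped (m+1) p.1).getD p.1 0 = m) :=
    (Primrec.or.comp (Primrec.snd.comp Primrec.snd)
      (Primrec.eq.comp h1 Primrec.fst).decide).to₂
  exact (Primrec.nat_rec' Primrec.id (Primrec.const false) hstep).of_eq fun m => rfl

def Xset : Set ℕ := {m | dFun m = false}

lemma mem_Xset {m : ℕ} : m ∈ Xset ↔ ¬ ∃ n, ack n n = m := by
  rw [show (m ∈ Xset) = (dFun m = false) from rfl, ← dFun_true]
  simp

lemma ack_diag_not_mem (n : ℕ) : ack n n ∉ Xset := by
  rw [mem_Xset]; exact not_not.mpr ⟨n, rfl⟩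

lemma ack_diag_strictMono : StrictMono fun n => ack n n := fun a b h =>
  lt_of_lt_of_le (ack_strictMono_right a h) (ack_le_ack h.le le_rfl)

lemma ack_diag_bound {m k : ℕ} (h : ack k k < ack m (m+2)) : k ≤ m := by
  by_contra hk
  have h1 : ack (m+1) (m+1) ≤ ack k k := ack_le_ack (by omega) (by omega)
  have h2 : ack m (m+2) ≤ ack (m+1) (m+1) := by
    exact ack_succ_right_le_ack_succ_left m (m+1)
  omega

theorem stmt_5 :
    ∃ R : ℕ → ℕ → Prop, Equivalence R ∧
      (∃ g : ℕ → ℕ → Bool, Primrec₂ g ∧ ∀ x y, R x y ↔ g x y = true) ∧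
      {C : Set ℕ | ∃ x, C = {y | R x y}}.Infinite ∧
      PrRed R (fun a b : ℕ => a = b) ∧ ¬ PrRed (fun a b : ℕ => a = b) R := by
  classical
  refine ⟨REq Xset, ⟨fun x => Or.inr rfl, ?_, ?_⟩, ?_, ?_, ?_, ?_⟩
  · rintro x y (⟨hx, hy⟩ | rfl)
    exacts [Or.inl ⟨hy, hx⟩, Or.inr rfl]
  · rintro x y z (⟨hx, hy⟩ | rfl) (⟨hy', hz⟩ | rfl)
    exacts [Or.inl ⟨hx, hz⟩, Or.inl ⟨hx, hy⟩, Or.inl ⟨hy', hz⟩, Or.inr rfl]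
  · -- primrec characteristic function
    refine ⟨fun x y => (!dFun x && !dFun y) || decide (x = y), ?_, ?_⟩
    · exact (Primrec.or.comp
        (Primrec.and.comp ((Primrec.not.comp dFun_primrec).comp Primrec.fst)
          ((Primrec.not.comp dFun_primrec).comp Primrec.snd))
        (Primrec.eq.comp Primrec.fst Primrec.snd).decide).to₂
    · intro x y
      have hx : (x ∈ Xset) = (dFun x = false) := rfl
      have hy : (y ∈ Xset) = (dFun y = false) := rfl
      simp [REq, hx, hy, Bool.not_eq_true']
  · -- infinitely many classes
    apply Set.infinite_of_injective_forall_mem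
      (f := fun n : ℕ => {y | REq Xset (ack n n) y})
    · intro a b h
      have h' : {y | REq Xset (ack a a) y} = {y | REq Xset (ack b b) y} := h
      have hb : ack b b ∈ {y | REq Xset (ack a a) y} := by
        rw [h']; exact Or.inr rfl
      rcases hb with ⟨hc, _⟩ | hc
      · exact absurd hc (ack_diag_not_mem a)
      · exact ack_diag_strictMono.injective hc
    · intro n; exact ⟨ack n n, rfl⟩
  · -- PrRed R Id
    refine ⟨fun x => cond (dFun x) (x+1) 0,
      Primrec.cond dFun_primrec Primrec.succ (Primrec.const 0), ?_⟩
    intro x y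
    constructor
    · rintro (⟨hx, hy⟩ | rfl)
      · show (bif dFun x then x+1 else 0) = (bif dFun y then y+1 else 0)
        rw [show dFun x = false from hx, show dFun y = false from hy]
        rfl
      · rfl
    · intro h
      change (bif dFun x then x+1 else 0) = (bif dFun y then y+1 else 0) at h
      cases hx : dFun x <;> cases hy : dFun y <;> rw [hx, hy] at h <;> simp at h
      · exact Or.inl ⟨hx, hy⟩
      · exact Or.inr h
  · -- ¬ PrRed Id R
    rintro ⟨f, hf, hspec⟩
    have hinj : Function.Injective f := fun x y h => (hspec x y).2 (Or.inr h)
    have hX : ∀ x y, x ≠ y → ¬(f x ∈ Xset ∧ f y ∈ Xset) := fun x y hne hc =>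
      hne ((hspec x y).2 (Or.inl hc))
    obtain ⟨m, hm⟩ := exists_lt_ack_of_nat_primrec (Primrec.nat_iff.mp hf)
    set N := m + 2 with hN
    set s := (Finset.range (N+1)).filter (fun j => ∃ n, ack n n = f j) with hs
    have hcard1 : ((Finset.range (N+1)).filter
        (fun j => ¬ ∃ n, ack n n = f j)).card ≤ 1 := by
      refine Finset.card_le_one.mpr fun a ha b hb => ?_
      rw [Finset.mem_filter] at ha hb
      by_contra hne
      exact hX a b hne ⟨mem_Xset.mpr ha.2, mem_Xset.mpr hb.2⟩
    have hsum : s.card + ((Finset.range (N+1)).filter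
        (fun j => ¬ ∃ n, ack n n = f j)).card = N + 1 := by
      rw [hs, Finset.card_filter_add_card_filter_not, Finset.card_range]
    have hscard : N ≤ s.card := by omega
    set K : ℕ → ℕ := fun v => if h : ∃ n, ack n n = v then h.choose else 0 with hK
    have hKspec : ∀ j ∈ s, ack (K (f j)) (K (f j)) = f j := by
      intro j hj
      rw [hs, Finset.mem_filter] at hj
      rw [hK]; dsimp only
      rw [dif_pos hj.2]
      exact hj.2.choose_spec
    have hmem : ∀ j ∈ s, K (f j) ∈ Finset.range (m+1) := by
      intro j hj
      have hj' := hj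
      rw [hs, Finset.mem_filter, Finset.mem_range] at hj'
      have h1 : f j < ack m N := lt_of_lt_of_le (hm j) (ack_le_ack le_rfl (by omega))
      rw [← hKspec j hj] at h1
      rw [Finset.mem_range]
      have := ack_diag_bound (m := m) (k := K (f j)) (by rwa [hN] at h1)
      omega
    have hinjOn : Set.InjOn (fun j => K (f j)) s := by
      intro a ha b hb h
      replace ha := Finset.mem_coe.mp ha
      replace hb := Finset.mem_coe.mp hb
      have h' : K (f a) = K (f b) := h
      have h2 : ack (K (f a)) (K (f a)) = ack (K (f b)) (K (f b)) := by rw [h']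
      rw [hKspec a ha, hKspec b hb] at h2
      exact hinj h2
    have := Finset.card_le_card_of_injOn (fun j => K (f j)) hmem hinjOn
    rw [Finset.card_range] at this
    omega
end

section
/- Let X and Y be coinfinite primitive recursive subsets of ℕ. Then R_X ≤_pr R_Y if and only if there exists a primitive recursive function h such that for all s, #(0^X)[s] ≤ #(0^Y)[h(s)], where #(0^Z)[s] denotes the number of elements of the complement of Z that are ≤ s. -/
open Classical in
lemma primrec_count {g : ℕ → Bool} (hg : Primrec g) :
    Primrec (fun n => Nat.count (fun k => g k = false) n) := by
  have h1 : Primrec (Nat.rec 0 (fun k ih => ih + cond (g k) 0 1) : ℕ → ℕ) :=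
    Primrec.nat_rec₁ 0 ((Primrec.nat_add.comp Primrec.snd
      (Primrec.cond (hg.comp Primrec.fst) (Primrec.const 0) (Primrec.const 1))).to₂)
  refine h1.of_eq fun n => ?_
  induction n with
  | zero => simp
  | succ n ih =>
    rw [Nat.count_succ]
    cases hgn : g n <;> simp [hgn, ih]

lemma primrec_runmax {f : ℕ → ℕ} (hf : Primrec f) :
    ∃ M : ℕ → ℕ, Primrec M ∧ ∀ s x, x ≤ s → f x ≤ M s := by
  refine ⟨Nat.rec (f 0) (fun k ih => max ih (f (k+1))),
    Primrec.nat_rec₁ _ ((Primrec.nat_max.comp Primrec.snd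
      (hf.comp (Primrec.succ.comp Primrec.fst))).to₂), ?_⟩
  intro s
  induction s with
  | zero => intro x hx; interval_cases x; exact le_rfl
  | succ n ih =>
    intro x hx
    rcases Nat.lt_succ_iff_lt_or_eq.mp (Nat.lt_succ_of_le hx) with h' | rfl
    · exact le_trans (ih x (Nat.lt_succ_iff.mp h')) (le_max_left _ _)
    · exact le_max_right _ _

lemma flatMap_range_eq (p : ℕ → Prop) [DecidablePred p] : ∀ B,
    (List.range B).flatMap (fun k => if p k then [k] else []) =
      (List.range (Nat.count p B)).map (Nat.nth p)
  | 0 => by simp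
  | (B+1) => by
    rw [List.range_succ, List.flatMap_append, flatMap_range_eq p B, Nat.count_succ]
    by_cases hB : p B
    · rw [if_pos hB, List.range_succ, List.map_append]
      simp [hB, Nat.nth_count hB]
    · simp [hB]

lemma getD_flatMap (p : ℕ → Prop) [DecidablePred p] {B i : ℕ} (hi : i < Nat.count p B) :
    ((List.range B).flatMap (fun k => if p k then [k] else [])).getD i 0 = Nat.nth p i := by
  rw [flatMap_range_eq]
  have hlen : i < ((List.range (Nat.count p B)).map (Nat.nth p)).length := by simpa using hi
  rw [List.getD_eq_getElem _ _ hlen, List.getElem_map, List.getElem_range]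

lemma zc_eq_count' {X : Set ℕ} {g : ℕ → Bool} (hg : ∀ n, n ∈ X ↔ g n = true) (s : ℕ) :
    {k | k ≤ s ∧ k ∉ X}.ncard = Nat.count (fun k => g k = false) (s+1) := by
  rw [Nat.count_eq_card_filter_range,
    show {k | k ≤ s ∧ k ∉ X} = ↑((Finset.range (s+1)).filter (fun k => g k = false)) by
      ext k
      simp [Finset.mem_filter, Finset.mem_range, Nat.lt_succ_iff, hg k, and_comm],
    Set.ncard_coe_finset]

theorem stmt_6 (X Y : Set ℕ) (hX : PRSet X) (hY : PRSet Y)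
    (hXc : Xᶜ.Infinite) (hYc : Yᶜ.Infinite) :
    PrRed (REq X) (REq Y) ↔
      ∃ h : ℕ → ℕ, Primrec h ∧ ∀ s, zc X s ≤ zc Y (h s) := by
  classical
  obtain ⟨fX, hfXpr, hfX⟩ := hX
  obtain ⟨fY, hfYpr, hfY⟩ := hY
  have hXmem : ∀ n, n ∉ X ↔ fX n = false := fun n => by simp [hfX n]
  have hYmem : ∀ n, n ∉ Y ↔ fY n = false := fun n => by simp [hfY n]
  have hpYinf : (setOf (fun k => fY k = false)).Infinite := by
    have he : (setOf (fun k => fY k = false)) = Yᶜ := by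
      ext k; simp [Set.mem_compl_iff, hYmem k]; exact Iff.rfl
    rw [he]; exact hYc
  constructor
  · rintro ⟨f, hfpr, hred⟩
    obtain ⟨M, hMpr, hMle⟩ := primrec_runmax hfpr
    set a0 : ℕ := if hn : X.Nonempty then hn.some else 0 with ha0
    refine ⟨fun s => max (f a0) (M (s+1)),
      Primrec.nat_max.comp (Primrec.const _) (hMpr.comp Primrec.succ), fun s => ?_⟩
    obtain ⟨α, hα1, hα2⟩ : ∃ α, (∀ k, k ≤ s → k ∉ X → ¬ REq X k α) ∧
        f α ≤ max (f a0) (M (s+1)) := by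
      by_cases hn : X.Nonempty
      · have ha0X : a0 ∈ X := by rw [ha0, dif_pos hn]; exact hn.some_mem
        refine ⟨a0, ?_, le_max_left _ _⟩
        rintro k hk hkX (⟨hk', _⟩ | rfl)
        · exact hkX hk'
        · exact hkX ha0X
      · refine ⟨s+1, ?_, le_trans (hMle (s+1) (s+1) le_rfl) (le_max_right _ _)⟩
        rintro k hk hkX (⟨hk', _⟩ | rfl)
        · exact hkX hk'
        · omega
    set S : Set ℕ := {k | k ≤ s ∧ k ∉ X} with hS
    set T : Set ℕ := {k | k ≤ max (f a0) (M (s+1)) ∧ k ∉ Y} with hT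
    set F : ℕ → ℕ := fun k => if f k ∈ Y then f α else f k with hF
    have key : ∀ k ∈ S, f k ≠ f α ∧ (f k ∈ Y → f α ∉ Y) := by
      intro k hk
      have h1 : ¬ REq Y (f k) (f α) := fun h => hα1 k hk.1 hk.2 ((hred k α).mpr h)
      exact ⟨fun he => h1 (Or.inr he), fun h2 h3 => h1 (Or.inl ⟨h2, h3⟩)⟩
    have himg : ∀ k ∈ S, F k ∈ T := by
      intro k hk
      by_cases hkY : f k ∈ Y
      · have : F k = f α := by simp [hF, hkY]
        rw [this]
        exact ⟨hα2, (key k hk).2 hkY⟩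
      · have : F k = f k := by simp [hF, hkY]
        rw [this]
        exact ⟨le_trans (hMle (s+1) k (Nat.le_succ_of_le hk.1)) (le_max_right _ _), hkY⟩
    have hinj : Set.InjOn F S := by
      intro j hj k hk he
      by_contra hne
      have hR : ¬ REq X j k := by
        rintro (⟨hj', _⟩ | rfl)
        · exact hj.2 hj'
        · exact hne rfl
      have hRY : ¬ REq Y (f j) (f k) := fun h2 => hR ((hred j k).mpr h2)
      have hfne : f j ≠ f k := fun he2 => hRY (Or.inr he2)
      have hnboth : ¬(f j ∈ Y ∧ f k ∈ Y) := fun hb => hRY (Or.inl hb)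
      by_cases hjY : f j ∈ Y <;> by_cases hkY : f k ∈ Y
      · exact hnboth ⟨hjY, hkY⟩
      · simp only [hF, if_pos hjY, if_neg hkY] at he
        exact (key k hk).1 he.symm
      · simp only [hF, if_neg hjY, if_pos hkY] at he
        exact (key j hj).1 he
      · simp only [hF, if_neg hjY, if_neg hkY] at he
        exact hfne he
    have hTfin : T.Finite :=
      (Set.finite_Iic (max (f a0) (M (s+1)))).subset fun k hk => hk.1
    exact Set.ncard_le_ncard_of_injOn F himg hinj hTfin
  · rintro ⟨h, hhpr, hzc⟩
    have hzcX : ∀ s, zc X s = Nat.count (fun k => fX k = false) (s+1) :=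
      fun s => zc_eq_count' hfX s
    have hzcY : ∀ s, zc Y s = Nat.count (fun k => fY k = false) (s+1) :=
      fun s => zc_eq_count' hfY s
    have hcnt : ∀ x, x ∉ X → 1 ≤ Nat.count (fun k => fX k = false) (x+1) := by
      intro x hx
      rw [Nat.count_succ, if_pos ((hXmem x).mp hx)]
      omega
    have hmono : ∀ x y, x < y → y ∉ X →
        Nat.count (fun k => fX k = false) (x+1) < Nat.count (fun k => fX k = false) (y+1) := by
      intro x y hxy hy
      have h1 : Nat.count (fun k => fX k = false) (x+1) ≤ Nat.count (fun k => fX k = false) y :=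
        Nat.count_monotone _ hxy
      have h2 : Nat.count (fun k => fX k = false) (y+1)
          = Nat.count (fun k => fX k = false) y + 1 := by
        rw [Nat.count_succ, if_pos ((hXmem y).mp hy)]
      omega
    by_cases hYne : Y.Nonempty
    · obtain ⟨b, hb⟩ := hYne
      set f : ℕ → ℕ := fun x => if fX x = true then b else
        (((List.range (h x + 1)).flatMap (fun k => if fY k = false then [k] else [])).getD
          (Nat.count (fun k => fX k = false) (x+1) - 1) 0) with hfdef
      have hfpr : Primrec f := by
        refine Primrec.ite (Primrec.eq.comp hfXpr (Primrec.const true)) (Primrec.const b) ?_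
        refine (Primrec.list_getD 0).comp ?_ ?_
        · refine Primrec.list_flatMap (Primrec.list_range.comp (Primrec.succ.comp hhpr)) ?_
          refine Primrec.ite (Primrec.eq.comp (hfYpr.comp Primrec.snd) (Primrec.const false))
            (Primrec.list_cons.comp Primrec.snd (Primrec.const [])) (Primrec.const [])
        · exact Primrec.pred.comp ((primrec_count hfXpr).comp Primrec.succ)
      have hfXval : ∀ x, x ∈ X → f x = b := by
        intro x hx
        simp only [hfdef, if_pos ((hfX x).mp hx)]
      have hfmem : ∀ x, x ∉ X →
          f x = Nat.nth (fun k => fY k = false) (Nat.count (fun k => fX k = false) (x+1) - 1) := by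
        intro x hx
        have hxb : fX x = false := (hXmem x).mp hx
        have hn1 := hcnt x hx
        have hlt : Nat.count (fun k => fX k = false) (x+1) - 1
            < Nat.count (fun k => fY k = false) (h x + 1) := by
          have h0 := hzc x
          rw [hzcX, hzcY] at h0
          omega
        simp only [hfdef, hxb, Bool.false_eq_true, if_false]
        exact getD_flatMap _ hlt
      have hfnotY : ∀ x, x ∉ X → f x ∉ Y := by
        intro x hx
        rw [hfmem x hx]
        exact (hYmem _).mpr (Nat.nth_mem_of_infinite hpYinf _)
      have hinj : ∀ u v, u ∉ X → v ∉ X → u < v → f u ≠ f v := by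
        intro u v hu hv huv
        rw [hfmem u hu, hfmem v hv]
        intro he
        have h3 := Nat.nth_injective hpYinf he
        have h1 := hcnt u hu
        have h2 := hmono u v huv hv
        omega
      refine ⟨f, hfpr, fun x y => ?_⟩
      constructor
      · rintro (⟨hx, hy⟩ | rfl)
        · exact Or.inl ⟨by rw [hfXval x hx]; exact hb, by rw [hfXval y hy]; exact hb⟩
        · exact Or.inr rfl
      · intro hR
        by_cases hxy : x = y
        · exact Or.inr hxy
        by_cases hx : x ∈ X <;> by_cases hy : y ∈ X
        · exact Or.inl ⟨hx, hy⟩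
        · exfalso
          rcases hR with ⟨_, h2⟩ | heq
          · exact hfnotY y hy h2
          · exact hfnotY y hy (by rw [← heq, hfXval x hx]; exact hb)
        · exfalso
          rcases hR with ⟨h1, _⟩ | heq
          · exact hfnotY x hx h1
          · exact hfnotY x hx (by rw [heq, hfXval y hy]; exact hb)
        · exfalso
          rcases hR with ⟨h1, _⟩ | heq
          · exact hfnotY x hx h1
          · rcases Nat.lt_or_ge x y with h' | h'
            · exact hinj x y hx hy h' heq
            · exact hinj y x hy hx (by omega) heq.symm
    · have hYe : ∀ y, y ∉ Y := fun y hy => hYne ⟨y, hy⟩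
      set f : ℕ → ℕ := fun x => if fX x = true then 0
        else Nat.count (fun k => fX k = false) (x+1) with hfdef
      have hfpr : Primrec f :=
        Primrec.ite (Primrec.eq.comp hfXpr (Primrec.const true)) (Primrec.const 0)
          ((primrec_count hfXpr).comp Primrec.succ)
      have hfXval : ∀ x, x ∈ X → f x = 0 := fun x hx => by
        simp only [hfdef, if_pos ((hfX x).mp hx)]
      have hfcval : ∀ x, x ∉ X → f x = Nat.count (fun k => fX k = false) (x+1) := fun x hx => by
        simp only [hfdef, (hXmem x).mp hx, Bool.false_eq_true, if_false]
      refine ⟨f, hfpr, fun x y => ?_⟩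
      constructor
      · rintro (⟨hx, hy⟩ | rfl)
        · exact Or.inr (by rw [hfXval x hx, hfXval y hy])
        · exact Or.inr rfl
      · rintro (⟨h1, _⟩ | heq)
        · exact absurd h1 (hYe _)
        by_cases hxy : x = y
        · exact Or.inr hxy
        by_cases hx : x ∈ X <;> by_cases hy : y ∈ X
        · exact Or.inl ⟨hx, hy⟩
        · exfalso
          rw [hfXval x hx, hfcval y hy] at heq
          have := hcnt y hy; omega
        · exfalso
          rw [hfcval x hx, hfXval y hy] at heq
          have := hcnt x hx; omega
        · exfalso
          rw [hfcval x hx, hfcval y hy] at heq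
          rcases Nat.lt_or_ge x y with h' | h'
          · have := hmono x y h' hy; omega
          · have := hmono y x (by omega) hx; omega
end

section
/- Let X and Y be coinfinite primitive recursive subsets of ℕ with 0 ∈ X ∩ Y. Define Z₀ ⊆ ℕ by: 0 ∈ Z₀, and for all s, s+1 ∉ Z₀ iff max(#(0^X)[s+1], #(0^Y)[s+1]) > max(#(0^X)[s], #(0^Y)[s]). Then Z₀ is primitive recursive, coinfinite, and for all s, #(0^{Z₀})[s] = max(#(0^X)[s], #(0^Y)[s]). -/
lemma zc_zero (X : Set ℕ) (h0 : 0 ∈ X) : zc X 0 = 0 := by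
  have : {k | k ≤ 0 ∧ k ∉ X} = ∅ := by
    ext k; simp only [Set.mem_setOf_eq, Nat.le_zero, Set.mem_empty_iff_false, iff_false]
    rintro ⟨rfl, hk⟩; exact hk h0
  unfold zc; rw [this, Set.ncard_empty]

lemma zc_fin (X : Set ℕ) (s : ℕ) : {k | k ≤ s ∧ k ∉ X}.Finite :=
  (Set.finite_Iic s).subset fun k hk => hk.1

open Classical in
lemma zc_succ (X : Set ℕ) (s : ℕ) :
    zc X (s+1) = zc X s + (if s+1 ∈ X then 0 else 1) := by
  classical
  by_cases h : s+1 ∈ X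
  · have : {k | k ≤ s+1 ∧ k ∉ X} = {k | k ≤ s ∧ k ∉ X} := by
      ext k
      simp only [Set.mem_setOf_eq, Nat.le_succ_iff_eq_or_le]
      constructor
      · rintro ⟨hk | hk, hkX⟩
        · exact absurd (hk ▸ h) hkX
        · exact ⟨hk, hkX⟩
      · rintro ⟨hk, hkX⟩; exact ⟨Or.inr hk, hkX⟩
    unfold zc; rw [this, if_pos h, Nat.add_zero]
  · have : {k | k ≤ s+1 ∧ k ∉ X} = insert (s+1) {k | k ≤ s ∧ k ∉ X} := by
      ext k
      simp only [Set.mem_setOf_eq, Set.mem_insert_iff, Nat.le_succ_iff_eq_or_le]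
      constructor
      · rintro ⟨hk | hk, hkX⟩
        · exact Or.inl hk
        · exact Or.inr ⟨hk, hkX⟩
      · rintro (rfl | ⟨hk, hkX⟩)
        · exact ⟨Or.inl rfl, h⟩
        · exact ⟨Or.inr hk, hkX⟩
    unfold zc
    rw [this, Set.ncard_insert_of_notMem (by simp) (zc_fin X s), if_neg h]

open Classical in
lemma zc_mono_succ (X : Set ℕ) (s : ℕ) : zc X s ≤ zc X (s+1) := by
  classical
  rw [zc_succ]; exact Nat.le_add_right _ _

open Classical in
lemma zc_succ_le (X : Set ℕ) (s : ℕ) : zc X (s+1) ≤ zc X s + 1 := by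
  classical
  rw [zc_succ]; split <;> omega

lemma zc_unbounded (X : Set ℕ) (hXc : Xᶜ.Infinite) (n : ℕ) : ∃ s, n ≤ zc X s := by
  induction n with
  | zero => exact ⟨0, Nat.zero_le _⟩
  | succ n ih =>
    obtain ⟨s, hs⟩ := ih
    obtain ⟨k, hk, hks⟩ := hXc.exists_gt s
    refine ⟨k, ?_⟩
    have hsub : insert k {j | j ≤ s ∧ j ∉ X} ⊆ {j | j ≤ k ∧ j ∉ X} := by
      rintro j (rfl | ⟨hj, hjX⟩)
      · exact ⟨le_refl _, hk⟩
      · exact ⟨hj.trans hks.le, hjX⟩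
    have hins : (insert k {j | j ≤ s ∧ j ∉ X}).ncard = zc X s + 1 := by
      rw [Set.ncard_insert_of_notMem (fun h => absurd h.1 (not_le.2 hks)) (zc_fin X s)]
      rfl
    calc n + 1 ≤ zc X s + 1 := by omega
      _ = (insert k {j | j ≤ s ∧ j ∉ X}).ncard := hins.symm
      _ ≤ zc X k := Set.ncard_le_ncard hsub ((Set.finite_Iic k).subset fun j hj => hj.1)

/-- counting function from a characteristic function -/
def countc (f : ℕ → Bool) : ℕ → ℕ := fun s => Nat.rec (if f 0 then 0 else 1)
  (fun n IH => IH + (if f (n+1) then 0 else 1)) s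

lemma countc_succ (f : ℕ → Bool) (s : ℕ) :
    countc f (s+1) = countc f s + (if f (s+1) then 0 else 1) := rfl

lemma count_primrec (f : ℕ → Bool) (hf : Primrec f) : Primrec (countc f) := by
  apply Primrec.nat_rec₁
  apply Primrec₂.comp₂ Primrec.nat_add.to₂ Primrec₂.right
  exact (Primrec.ite (Primrec.eq.comp (hf.comp (Primrec.succ.comp Primrec.fst))
    (Primrec.const true)) (Primrec.const 0) (Primrec.const 1)).to₂

lemma countc_eq_zc (X : Set ℕ) (f : ℕ → Bool) (hfX : ∀ n, n ∈ X ↔ f n = true)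
    (hX0 : 0 ∈ X) : ∀ s, countc f s = zc X s := by
  classical
  intro s
  induction s with
  | zero =>
    have h : f 0 = true := (hfX 0).mp hX0
    simp [countc, h, zc_zero X hX0]
  | succ s ih =>
    rw [countc_succ, ih, zc_succ]
    by_cases h : s+1 ∈ X
    · simp [(hfX _).mp h, h]
    · have hf1 : f (s+1) ≠ true := fun hh => h ((hfX _).mpr hh)
      simp [hf1, h]

theorem stmt_7 (X Y Z₀ : Set ℕ) (hX : PRSet X) (hY : PRSet Y)
    (hXc : Xᶜ.Infinite) (hYc : Yᶜ.Infinite) (hX0 : 0 ∈ X) (hY0 : 0 ∈ Y)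
    (hZ0 : 0 ∈ Z₀)
    (hZ : ∀ s, (s + 1 ∉ Z₀ ↔
      max (zc X (s+1)) (zc Y (s+1)) > max (zc X s) (zc Y s))) :
    PRSet Z₀ ∧ Z₀ᶜ.Infinite ∧ ∀ s, zc Z₀ s = max (zc X s) (zc Y s) := by
  classical
  obtain ⟨f, hfp, hfX⟩ := hX
  obtain ⟨g, hgp, hgY⟩ := hY
  set M : ℕ → ℕ := fun s => max (zc X s) (zc Y s) with hM
  -- main counting identity
  have hmain : ∀ s, zc Z₀ s = M s := by
    intro s
    induction s with
    | zero => simp [hM, zc_zero X hX0, zc_zero Y hY0, zc_zero Z₀ hZ0]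
    | succ s ih =>
      have hmono : M s ≤ M (s+1) :=
        max_le_max (zc_mono_succ X s) (zc_mono_succ Y s)
      have hle : M (s+1) ≤ M s + 1 := by
        have := zc_succ_le X s; have := zc_succ_le Y s
        simp only [hM, max_le_iff]; omega
      rw [zc_succ, ih]
      simp only [hM] at hmono hle ⊢
      by_cases hmem : s+1 ∈ Z₀
      · have h2 : ¬ (max (zc X (s+1)) (zc Y (s+1)) > max (zc X s) (zc Y s)) :=
          fun hgt => (hZ s).mpr hgt hmem
        rw [if_pos hmem]
        omega
      · have h2 := (hZ s).mp hmem
        rw [if_neg hmem]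
        omega
  refine ⟨?_, ?_, hmain⟩
  · -- PRSet Z₀
    have hcXz := countc_eq_zc X f hfX hX0
    have hcYz := countc_eq_zc Y g hgY hY0
    have hcXp : Primrec (countc f) := count_primrec f hfp
    have hcYp : Primrec (countc g) := count_primrec g hgp
    refine ⟨fun n => if n = 0 then true else
      decide (max (countc f n) (countc g n) ≤ max (countc f (n-1)) (countc g (n-1))), ?_, ?_⟩
    · apply Primrec.ite (Primrec.eq.comp Primrec.id (Primrec.const 0)) (Primrec.const true)
      have hmaxn : Primrec (fun n => max (countc f n) (countc g n)) :=
        Primrec.nat_max.comp hcXp hcYp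
      have hmaxp : Primrec (fun n => max (countc f (n-1)) (countc g (n-1))) :=
        hmaxn.comp (Primrec.nat_sub.comp Primrec.id (Primrec.const 1))
      exact (Primrec.nat_le.comp hmaxn hmaxp).decide
    · intro n
      rcases n with _ | s
      · simp [hZ0]
      · have h1 : s + 1 ∈ Z₀ ↔ M (s+1) ≤ M s := by
          constructor
          · intro hm
            by_contra hlt
            exact (hZ s).mpr (lt_of_not_ge hlt) hm
          · intro hle
            by_contra hnot
            exact absurd ((hZ s).mp hnot) (not_lt.mpr hle)
        rw [h1]
        simp only [Nat.succ_ne_zero, if_false, Nat.add_sub_cancel, hcXz, hcYz, hM,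
          decide_eq_true_eq]
  · -- coinfinite
    by_contra hfin
    rw [Set.not_infinite] at hfin
    obtain ⟨s, hs⟩ := zc_unbounded X hXc (Z₀ᶜ.ncard + 1)
    have hsub : {k | k ≤ s ∧ k ∉ Z₀} ⊆ Z₀ᶜ := fun k hk => hk.2
    have hle : zc Z₀ s ≤ Z₀ᶜ.ncard := Set.ncard_le_ncard hsub hfin
    have hge : zc X s ≤ zc Z₀ s := (hmain s).symm ▸ le_max_left _ _
    omega
end

section
/- Let X, Y be coinfinite primitive recursive subsets of ℕ with 0 ∈ X ∩ Y, and let Z₀ be the set with 0 ∈ Z₀ and s+1 ∉ Z₀ iff max(#(0^X)[s+1], #(0^Y)[s+1]) > max(#(0^X)[s], #(0^Y)[s]). Then R_{Z₀} is the least upper bound of R_X and R_Y with respect to ≤_pr: we have R_X ≤_pr R_{Z₀}, R_Y ≤_pr R_{Z₀}, and for every coinfinite primitive recursive V, if R_X ≤_pr R_V and R_Y ≤_pr R_V then R_{Z₀} ≤_pr R_V. -/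
/-! ### Auxiliary machinery -/

/-- count of `y < b` with `F y < n`. -/
def cntlt (F : ℕ → ℕ) (n : ℕ) : ℕ → ℕ
  | 0 => 0
  | b+1 => cntlt F n b + (if F b < n then 1 else 0)

/-- running maximum of `f` on `[0,s]`. -/
def rmax (f : ℕ → ℕ) : ℕ → ℕ
  | 0 => f 0
  | s+1 => max (rmax f s) (f (s+1))

theorem cntlt_primrec {F : ℕ → ℕ} (hF : Primrec F) : Primrec₂ (cntlt F) := by
  have h : Primrec₂ (fun (n b : ℕ) =>
      b.rec 0 (fun m IH => IH + (if F m < n then 1 else 0)) : ℕ → ℕ → ℕ) := by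
    refine Primrec.nat_rec (f := fun _ : ℕ => 0)
      (g := fun (n : ℕ) (p : ℕ × ℕ) => p.2 + (if F p.1 < n then 1 else 0))
      (Primrec.const 0) ?_
    exact (Primrec.nat_add.comp (Primrec.snd.comp Primrec.snd)
      (Primrec.ite ((Primrec.nat_lt).comp (hF.comp (Primrec.fst.comp Primrec.snd)) Primrec.fst)
        (Primrec.const 1) (Primrec.const 0))).to₂
  exact h.of_eq (fun n b => by induction b with
    | zero => rfl
    | succ b ih => simp [cntlt, ih])

theorem rmax_primrec {f : ℕ → ℕ} (hf : Primrec f) : Primrec (rmax f) := by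
  have h : Primrec (fun s : ℕ => s.rec (f 0) (fun m IH => max IH (f (m+1))) : ℕ → ℕ) :=
    Primrec.nat_rec₁ (f 0)
      ((Primrec.nat_max.comp Primrec.snd (hf.comp (Primrec.succ.comp Primrec.fst))).to₂)
  exact h.of_eq (fun s => by induction s with
    | zero => rfl
    | succ s ih => simp [rmax, ih])

theorem le_rmax {f : ℕ → ℕ} {k s : ℕ} (h : k ≤ s) : f k ≤ rmax f s := by
  induction s with
  | zero => simp_all [rmax, Nat.le_zero.mp h]
  | succ s ih =>
    rcases Nat.lt_or_ge k (s+1) with h' | h'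
    · exact le_trans (ih (Nat.lt_succ_iff.mp h')) (le_max_left _ _)
    · have : k = s + 1 := le_antisymm h h'
      subst this; exact le_max_right _ _

theorem cntlt_eq_card (F : ℕ → ℕ) (n b : ℕ) :
    cntlt F n b = ((Finset.range b).filter (fun y => F y < n)).card := by
  induction b with
  | zero => rfl
  | succ b ih =>
    rw [Finset.range_add_one, Finset.filter_insert]
    by_cases h : F b < n
    · rw [if_pos h, Finset.card_insert_of_notMem (by simp)]
      simp [cntlt, ih, h]
    · rw [if_neg h]; simp [cntlt, ih, h]

theorem cntlt_eq_of {F : ℕ → ℕ} {n b y₀ : ℕ} (h : ∀ y, F y < n ↔ y < y₀)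
    (hb : y₀ ≤ b) : cntlt F n b = y₀ := by
  rw [cntlt_eq_card]
  have : (Finset.range b).filter (fun y => F y < n) = Finset.range y₀ := by
    ext y
    simp only [Finset.mem_filter, Finset.mem_range, h y]
    omega
  rw [this, Finset.card_range]

section zcLemmas

variable {A B : Set ℕ}

theorem zc_set_finite (A : Set ℕ) (s : ℕ) : {k | k ≤ s ∧ k ∉ A}.Finite :=
  (Set.finite_Iic s).subset (fun k hk => hk.1)

theorem zc_zero_mem (h : 0 ∈ A) : zc A 0 = 0 := by
  have : {k | k ≤ 0 ∧ k ∉ A} = ∅ := by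
    ext k; simp only [Set.mem_setOf_eq, Set.mem_empty_iff_false, iff_false, not_and]
    intro hk; interval_cases k; simpa using h
  rw [zc, this, Set.ncard_empty]

theorem zc_zero_not (h : 0 ∉ A) : zc A 0 = 1 := by
  have : {k | k ≤ 0 ∧ k ∉ A} = {0} := by
    ext k; simp only [Set.mem_setOf_eq, Set.mem_singleton_iff]
    constructor
    · rintro ⟨hk, -⟩; omega
    · rintro rfl; exact ⟨le_refl _, h⟩
  rw [zc, this, Set.ncard_singleton]

theorem zc_succ_mem {s : ℕ} (h : s + 1 ∈ A) : zc A (s+1) = zc A s := by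
  have : {k | k ≤ s + 1 ∧ k ∉ A} = {k | k ≤ s ∧ k ∉ A} := by
    ext k; simp only [Set.mem_setOf_eq]
    constructor
    · rintro ⟨hk, hkA⟩
      refine ⟨?_, hkA⟩
      by_contra hgt
      have hk1 : k = s + 1 := by omega
      subst hk1; exact hkA h
    · rintro ⟨hk, hkA⟩; exact ⟨by omega, hkA⟩
  rw [zc, zc, this]

theorem zc_succ_not {s : ℕ} (h : s + 1 ∉ A) : zc A (s+1) = zc A s + 1 := by
  have hins : {k | k ≤ s + 1 ∧ k ∉ A} = insert (s+1) {k | k ≤ s ∧ k ∉ A} := by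
    ext k; simp only [Set.mem_setOf_eq, Set.mem_insert_iff]
    constructor
    · rintro ⟨hk, hkA⟩
      rcases Nat.lt_or_ge k (s+1) with h' | h'
      · exact Or.inr ⟨by omega, hkA⟩
      · exact Or.inl (by omega)
    · rintro (rfl | ⟨hk, hkA⟩)
      · exact ⟨le_refl _, h⟩
      · exact ⟨by omega, hkA⟩
  rw [zc, hins, Set.ncard_insert_of_notMem (by simp) (zc_set_finite A s)]
  rfl

theorem zc_mono : Monotone (zc A) := by
  apply monotone_nat_of_le_succ
  intro n
  by_cases h : n + 1 ∈ A
  · rw [zc_succ_mem h]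
  · rw [zc_succ_not h]; omega

theorem zc_pos {x : ℕ} (h : x ∉ A) : 1 ≤ zc A x := by
  cases x with
  | zero => rw [zc_zero_not h]
  | succ s => rw [zc_succ_not h]; omega

theorem zc_strict {x y : ℕ} (hxy : x < y) (hy : y ∉ A) : zc A x < zc A y := by
  cases y with
  | zero => omega
  | succ s =>
    rw [zc_succ_not hy]
    have := zc_mono (A := A) (show x ≤ s by omega)
    omega

theorem zc_inj {x y : ℕ} (hx : x ∉ A) (hy : y ∉ A) (h : zc A x = zc A y) : x = y := by
  rcases lt_trichotomy x y with h' | h' | h'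
  · exact absurd h (Nat.ne_of_lt (zc_strict h' hy))
  · exact h'
  · exact absurd h.symm (Nat.ne_of_lt (zc_strict h' hx))

theorem zc_hit {n s : ℕ} (h1 : 1 ≤ n) (h2 : n ≤ zc B s) :
    ∃ y, y ≤ s ∧ zc B y = n ∧ y ∉ B ∧ ∀ z < y, zc B z < n := by
  induction s with
  | zero =>
    by_cases h : 0 ∈ B
    · rw [zc_zero_mem h] at h2; omega
    · refine ⟨0, le_refl _, ?_, h, fun z hz => absurd hz (by omega)⟩
      rw [zc_zero_not h]
      rw [zc_zero_not h] at h2; omega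
  | succ s ih =>
    by_cases h : n ≤ zc B s
    · obtain ⟨y, hy1, hy2, hy3, hy4⟩ := ih h
      exact ⟨y, by omega, hy2, hy3, hy4⟩
    · push_neg at h
      by_cases hm : s + 1 ∈ B
      · rw [zc_succ_mem hm] at h2; omega
      · rw [zc_succ_not hm] at h2
        refine ⟨s+1, le_refl _, ?_, hm, ?_⟩
        · rw [zc_succ_not hm]; omega
        · intro z hz
          have := zc_mono (A := B) (show z ≤ s by omega)
          omega

end zcLemmas

/-- a computable version of `zc` from a characteristic function. -/
def zcb (f : ℕ → Bool) (s : ℕ) : ℕ := cntlt (fun y => bif f y then 1 else 0) 1 (s+1)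

theorem zcb_primrec {f : ℕ → Bool} (hf : Primrec f) : Primrec (zcb f) :=
  (cntlt_primrec (Primrec.cond hf (Primrec.const 1) (Primrec.const 0))).comp
    (Primrec.const 1) Primrec.succ

theorem zc_eq_zcb {A : Set ℕ} {f : ℕ → Bool} (hfA : ∀ n, n ∈ A ↔ f n = true) :
    ∀ s, zc A s = zcb f s := by
  intro s
  induction s with
  | zero =>
    cases hf0 : f 0 with
    | false =>
      have h0 : 0 ∉ A := fun h => by simp [(hfA 0).mp h] at hf0
      rw [zc_zero_not h0]; simp [zcb, cntlt, hf0]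
    | true =>
      rw [zc_zero_mem ((hfA 0).mpr hf0)]; simp [zcb, cntlt, hf0]
  | succ s ih =>
    cases hfs : f (s+1) with
    | false =>
      have hm : s + 1 ∉ A := fun h => by simp [(hfA _).mp h] at hfs
      rw [zc_succ_not hm, ih]; simp [zcb, cntlt, hfs]
    | true =>
      rw [zc_succ_mem ((hfA _).mpr hfs), ih]; simp [zcb, cntlt, hfs]

theorem zc_primrec {A : Set ℕ} {f : ℕ → Bool} (hf : Primrec f)
    (hfA : ∀ n, n ∈ A ↔ f n = true) : Primrec (zc A) :=
  (zcb_primrec hf).of_eq (fun s => (zc_eq_zcb hfA s).symm)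

/-- The key reduction construction: a primrec bound on the counting functions
gives a reduction of the orbit relations. -/
theorem red_of_bound {A B : Set ℕ} {f : ℕ → Bool} (hf : Primrec f)
    (hfA : ∀ n, n ∈ A ↔ f n = true) (hA0 : 0 ∈ A)
    (hzB : Primrec (zc B)) {H : ℕ → ℕ} (hH : Primrec H)
    (hb : ∀ s, zc A s ≤ zc B (H s)) : PrRed (REq A) (REq B) := by
  rcases Set.eq_empty_or_nonempty B with hB | ⟨b₀, hb₀⟩
  · refine ⟨fun x => bif f x then 0 else x,
      Primrec.cond hf (Primrec.const 0) Primrec.id, ?_⟩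
    subst hB
    intro x y
    show REq A x y ↔ REq ∅ (bif f x then 0 else x) (bif f y then 0 else y)
    simp only [REq, Set.mem_empty_iff_false, false_and, false_or]
    constructor
    · rintro (⟨hx, hy⟩ | rfl)
      · rw [(hfA x).mp hx, (hfA y).mp hy]; rfl
      · rfl
    · intro h
      cases hfx : f x <;> cases hfy : f y <;> rw [hfx, hfy] at h <;> simp only [cond] at h
      · exact Or.inr h
      · exfalso
        have hx : x ∉ A := fun hm => by simp [(hfA x).mp hm] at hfx
        exact hx (h ▸ hA0)
      · exfalso
        have hy : y ∉ A := fun hm => by simp [(hfA y).mp hm] at hfy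
        exact hy (h ▸ hA0)
      · exact Or.inl ⟨(hfA x).mpr hfx, (hfA y).mpr hfy⟩
  · have hzA : Primrec (zc A) := zc_primrec hf hfA
    set N : ℕ → ℕ := fun x => cntlt (zc B) (zc A x) (H x + 1) with hN
    have key : ∀ x, x ∉ A → N x ∉ B ∧ zc B (N x) = zc A x := by
      intro x hx
      obtain ⟨y₀, hy₀s, hy₀v, hy₀B, hy₀min⟩ := zc_hit (zc_pos hx) (hb x)
      have hiff : ∀ y, zc B y < zc A x ↔ y < y₀ := by
        intro y
        constructor
        · intro hlt
          by_contra hge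
          push_neg at hge
          have := zc_mono (A := B) hge
          omega
        · exact hy₀min y
      have hNx : N x = y₀ := cntlt_eq_of hiff (by omega)
      rw [hNx]; exact ⟨hy₀B, hy₀v⟩
    refine ⟨fun x => bif f x then b₀ else N x,
      Primrec.cond hf (Primrec.const b₀)
        ((cntlt_primrec hzB).comp hzA (Primrec.succ.comp hH)), ?_⟩
    intro x y
    have gmem : ∀ z, z ∈ A → (bif f z then b₀ else N z) = b₀ := by
      intro z hz; rw [(hfA z).mp hz]; rfl
    have gnot : ∀ z, z ∉ A → (bif f z then b₀ else N z) = N z := by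
      intro z hz
      cases hfz : f z with
      | false => rfl
      | true => exact absurd ((hfA z).mpr hfz) hz
    show REq A x y ↔ REq B (bif f x then b₀ else N x) (bif f y then b₀ else N y)
    simp only [REq]
    constructor
    · rintro (⟨hx, hy⟩ | rfl)
      · rw [gmem x hx, gmem y hy]; exact Or.inr rfl
      · exact Or.inr rfl
    · intro h
      by_cases hx : x ∈ A <;> by_cases hy : y ∈ A
      · exact Or.inl ⟨hx, hy⟩
      · exfalso
        rw [gmem x hx, gnot y hy] at h
        obtain ⟨hNB, -⟩ := key y hy
        rcases h with ⟨-, hB2⟩ | heq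
        · exact hNB hB2
        · exact hNB (by rw [← heq]; exact hb₀)
      · exfalso
        rw [gnot x hx, gmem y hy] at h
        obtain ⟨hNB, -⟩ := key x hx
        rcases h with ⟨hB1, -⟩ | heq
        · exact hNB hB1
        · exact hNB (by rw [heq]; exact hb₀)
      · right
        rw [gnot x hx, gnot y hy] at h
        obtain ⟨hNBx, hNzx⟩ := key x hx
        obtain ⟨hNBy, hNzy⟩ := key y hy
        rcases h with ⟨hB1, -⟩ | heq
        · exact absurd hB1 hNBx
        · exact zc_inj hx hy (by rw [← hNzx, ← hNzy, heq])

/-- From a reduction of orbit relations we get a counting bound along the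
running maximum of the reduction. -/
theorem zc_bound_of_red {A V : Set ℕ} (hA0 : 0 ∈ A) {f : ℕ → ℕ}
    (hred : ∀ x y, REq A x y ↔ REq V (f x) (f y)) (s : ℕ) :
    zc A s ≤ zc V (rmax f s) := by
  classical
  have key : ∀ k, k ∉ A → f k ≠ f 0 ∧ ¬(f k ∈ V ∧ f 0 ∈ V) := by
    intro k hk
    have hk0 : ¬ REq A k 0 := by
      rintro (⟨h1, -⟩ | rfl)
      · exact hk h1
      · exact hk hA0
    have h2 := mt (hred k 0).mpr hk0
    rw [REq] at h2
    push_neg at h2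
    exact ⟨h2.2, fun hpq => h2.1 hpq.1 hpq.2⟩
  have key2 : ∀ k k', k ∉ A → k' ∉ A → k ≠ k' →
      f k ≠ f k' ∧ ¬(f k ∈ V ∧ f k' ∈ V) := by
    intro k k' hk hk' hne
    have hkk' : ¬ REq A k k' := by
      rintro (⟨h1, -⟩ | h)
      · exact hk h1
      · exact hne h
    have h2 := mt (hred k k').mpr hkk'
    rw [REq] at h2
    push_neg at h2
    exact ⟨h2.2, fun hpq => h2.1 hpq.1 hpq.2⟩
  rw [zc, zc]
  refine Set.ncard_le_ncard_of_injOn (fun k => if f k ∈ V then f 0 else f k) ?_ ?_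
    (zc_set_finite V _)
  · rintro k ⟨hks, hkA⟩
    show (if f k ∈ V then f 0 else f k) ≤ rmax f s ∧ (if f k ∈ V then f 0 else f k) ∉ V
    by_cases hv : f k ∈ V
    · rw [if_pos hv]
      exact ⟨le_rmax (Nat.zero_le s), fun h0V => (key k hkA).2 ⟨hv, h0V⟩⟩
    · rw [if_neg hv]
      exact ⟨le_rmax hks, hv⟩
  · rintro k ⟨hks, hkA⟩ k' ⟨hks', hkA'⟩ heq
    replace heq : (if f k ∈ V then f 0 else f k) = (if f k' ∈ V then f 0 else f k') := heq
    by_contra hne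
    obtain ⟨hne', hnb⟩ := key2 k k' hkA hkA' hne
    by_cases h1 : f k ∈ V <;> by_cases h2 : f k' ∈ V
    · exact hnb ⟨h1, h2⟩
    · rw [if_pos h1, if_neg h2] at heq
      exact (key k' hkA').1 heq.symm
    · rw [if_neg h1, if_pos h2] at heq
      exact (key k hkA).1 heq
    · rw [if_neg h1, if_neg h2] at heq
      exact hne' heq

theorem stmt_8 (X Y Z₀ : Set ℕ) (hX : PRSet X) (hY : PRSet Y)
    (hXc : Xᶜ.Infinite) (hYc : Yᶜ.Infinite) (hX0 : 0 ∈ X) (hY0 : 0 ∈ Y)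
    (hZ0 : 0 ∈ Z₀)
    (hZ : ∀ s, (s + 1 ∉ Z₀ ↔
      max (zc X (s+1)) (zc Y (s+1)) > max (zc X s) (zc Y s))) :
    PrRed (REq X) (REq Z₀) ∧ PrRed (REq Y) (REq Z₀) ∧
      ∀ V : Set ℕ, PRSet V → Vᶜ.Infinite →
        PrRed (REq X) (REq V) → PrRed (REq Y) (REq V) →
          PrRed (REq Z₀) (REq V) := by
  obtain ⟨fX, hfX, hfXc⟩ := hX
  obtain ⟨fY, hfY, hfYc⟩ := hY
  have hzcX : Primrec (zc X) := zc_primrec hfX hfXc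
  have hzcY : Primrec (zc Y) := zc_primrec hfY hfYc
  -- the counting function of Z₀ is the max of the counting functions of X and Y
  have hzZ : ∀ s, zc Z₀ s = max (zc X s) (zc Y s) := by
    intro s
    induction s with
    | zero => rw [zc_zero_mem hZ0, zc_zero_mem hX0, zc_zero_mem hY0]; simp
    | succ s ih =>
      have hx : zc X (s+1) ≤ zc X s + 1 := by
        by_cases h : s + 1 ∈ X
        · rw [zc_succ_mem h]; omega
        · rw [zc_succ_not h]
      have hy : zc Y (s+1) ≤ zc Y s + 1 := by
        by_cases h : s + 1 ∈ Y
        · rw [zc_succ_mem h]; omega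
        · rw [zc_succ_not h]
      have hmono : max (zc X s) (zc Y s) ≤ max (zc X (s+1)) (zc Y (s+1)) :=
        max_le_max (zc_mono (Nat.le_succ s)) (zc_mono (Nat.le_succ s))
      have hstep : max (zc X (s+1)) (zc Y (s+1)) ≤ max (zc X s) (zc Y s) + 1 :=
        max_le (hx.trans (Nat.add_le_add_right (le_max_left _ _) 1))
          (hy.trans (Nat.add_le_add_right (le_max_right _ _) 1))
      by_cases hm : s + 1 ∈ Z₀
      · have hle : ¬ max (zc X (s+1)) (zc Y (s+1)) > max (zc X s) (zc Y s) :=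
          fun hgt => ((hZ s).mpr hgt) hm
        rw [zc_succ_mem hm, ih]
        omega
      · have hgt := (hZ s).mp hm
        rw [zc_succ_not hm, ih]
        omega
  have hzcZ : Primrec (zc Z₀) :=
    (Primrec.nat_max.comp hzcX hzcY).of_eq (fun s => (hzZ s).symm)
  -- a primitive recursive characteristic function for Z₀
  set Mc : ℕ → ℕ := fun s => max (zcb fX s) (zcb fY s) with hMc
  have hMceq : ∀ s, Mc s = max (zc X s) (zc Y s) := by
    intro s
    rw [hMc]
    rw [zc_eq_zcb hfXc, zc_eq_zcb hfYc]
  have hMcPrim : Primrec Mc :=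
    Primrec.nat_max.comp (zcb_primrec hfX) (zcb_primrec hfY)
  have hpZ : Primrec (fun x => decide (x = 0) || decide (Mc x = Mc (x - 1))) :=
    Primrec.or.comp (Primrec.eq.comp Primrec.id (Primrec.const 0)).decide
      (Primrec.eq.comp hMcPrim (hMcPrim.comp Primrec.pred)).decide
  have hpZc : ∀ n, n ∈ Z₀ ↔ (decide (n = 0) || decide (Mc n = Mc (n - 1))) = true := by
    intro n
    cases n with
    | zero => simpa using hZ0
    | succ s =>
      have hmono : max (zc X s) (zc Y s) ≤ max (zc X (s+1)) (zc Y (s+1)) :=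
        max_le_max (zc_mono (Nat.le_succ s)) (zc_mono (Nat.le_succ s))
      simp only [Nat.succ_ne_zero, decide_false, Bool.false_or, decide_eq_true_eq,
        Nat.add_sub_cancel]
      rw [hMceq, hMceq]
      constructor
      · intro hm
        have hle : ¬ max (zc X (s+1)) (zc Y (s+1)) > max (zc X s) (zc Y s) :=
          fun hgt => ((hZ s).mpr hgt) hm
        omega
      · intro heq
        by_contra hm
        have hgt := (hZ s).mp hm
        omega
  refine ⟨?_, ?_, ?_⟩
  · exact red_of_bound hfX hfXc hX0 hzcZ Primrec.id
      (fun s => by show zc X s ≤ zc Z₀ s; rw [hzZ s]; exact le_max_left _ _)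
  · exact red_of_bound hfY hfYc hY0 hzcZ Primrec.id
      (fun s => by show zc Y s ≤ zc Z₀ s; rw [hzZ s]; exact le_max_right _ _)
  · intro V hV hVc hRX hRY
    obtain ⟨fV, hfV, hfVc⟩ := hV
    obtain ⟨gX, hgX, hgXr⟩ := hRX
    obtain ⟨gY, hgY, hgYr⟩ := hRY
    have hzcV : Primrec (zc V) := zc_primrec hfV hfVc
    have hbX : ∀ s, zc X s ≤ zc V (rmax gX s) := zc_bound_of_red hX0 hgXr
    have hbY : ∀ s, zc Y s ≤ zc V (rmax gY s) := zc_bound_of_red hY0 hgYr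
    refine red_of_bound hpZ hpZc hZ0 hzcV
      (H := fun s => max (rmax gX s) (rmax gY s))
      (Primrec.nat_max.comp (rmax_primrec hgX) (rmax_primrec hgY)) ?_
    intro s
    rw [hzZ s]
    apply max_le
    · exact (hbX s).trans (zc_mono (le_max_left _ _))
    · exact (hbY s).trans (zc_mono (le_max_right _ _))
end

section
/- There is no minimal pair of punctual degrees: for any coinfinite primitive recursive sets X, Y with R_X and R_Y each having infinitely many classes, there exists a coinfinite primitive recursive Z such that R_Z ≤_pr R_X, R_Z ≤_pr R_Y, and R_Z has infinitely many equivalence classes (so the infimum is never a finite/trivial relation when both arguments are non-finite). -/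
namespace S11

/-- count of `k ≤ s` with `χ k = false`. -/
def cnt (χ : ℕ → Bool) : ℕ → ℕ
  | 0 => bif χ 0 then 0 else 1
  | (s+1) => cnt χ s + (bif χ (s+1) then 0 else 1)

lemma primrec_cnt {χ : ℕ → Bool} (hχ : Primrec χ) : Primrec (cnt χ) := by
  have : Primrec (fun s => Nat.rec (motive := fun _ => ℕ)
      (bif χ 0 then 0 else 1) (fun s ih => ih + (bif χ (s+1) then 0 else 1)) s) := by
    apply Primrec.nat_rec₁
    exact Primrec₂.comp₂ Primrec.nat_add Primrec₂.right
      ((Primrec.cond (hχ.comp (Primrec.succ.comp Primrec.fst))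
        (Primrec.const 0) (Primrec.const 1)).to₂)
  exact this.of_eq (fun n => by induction n with
    | zero => rfl
    | succ n ih => simp [cnt, ← ih])

lemma cnt_mono (χ : ℕ → Bool) : Monotone (cnt χ) := by
  apply monotone_nat_of_le_succ
  intro s; show cnt χ s ≤ cnt χ s + _; omega

lemma cnt_succ_le (χ : ℕ → Bool) (s : ℕ) : cnt χ (s+1) ≤ cnt χ s + 1 := by
  show cnt χ s + _ ≤ _; cases h : χ (s+1) <;> simp

lemma cnt_succ_of_false {χ : ℕ → Bool} {s : ℕ} (h : χ (s+1) = false) :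
    cnt χ (s+1) = cnt χ s + 1 := by simp [cnt, h]

lemma cnt_succ_of_true {χ : ℕ → Bool} {s : ℕ} (h : χ (s+1) = true) :
    cnt χ (s+1) = cnt χ s := by simp [cnt, h]

lemma cnt_pos_of_false {χ : ℕ → Bool} {s : ℕ} (h : χ s = false) : 1 ≤ cnt χ s := by
  cases s with
  | zero => simp [cnt, h]
  | succ n => rw [cnt_succ_of_false h]; omega

lemma cnt_lt_of_false {χ : ℕ → Bool} {k k' : ℕ} (hk : k < k') (h : χ k' = false) :
    cnt χ k < cnt χ k' := by
  cases k' with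
  | zero => omega
  | succ n =>
    rw [cnt_succ_of_false h]
    have := cnt_mono χ (Nat.lt_succ_iff.mp hk)
    omega

lemma cnt_zero_le (χ : ℕ → Bool) : cnt χ 0 ≤ 1 := by
  show (bif χ 0 then 0 else 1) ≤ 1; cases χ 0 <;> simp

/-- unboundedness of cnt from infinitude of complement -/
lemma cnt_unbounded {χ : ℕ → Bool} (h : {n | χ n = false}.Infinite) (N : ℕ) :
    ∃ s, N ≤ cnt χ s := by
  induction N with
  | zero => exact ⟨0, Nat.zero_le _⟩
  | succ n ih =>
    obtain ⟨s, hs⟩ := ih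
    obtain ⟨k, hk, hks⟩ := h.exists_gt s
    exact ⟨k, by have := cnt_lt_of_false hks hk; omega⟩

lemma infinite_of_cnt_unbounded {χ : ℕ → Bool} (h : ∀ N, ∃ s, N ≤ cnt χ s) :
    {n | χ n = false}.Infinite := by
  rw [Set.infinite_coe_iff.symm]
  by_contra hf
  rw [not_infinite_iff_finite] at hf
  have hfin : {n | χ n = false}.Finite := Set.toFinite _
  obtain ⟨B, hB⟩ := hfin.bddAbove
  -- all k > B have χ k = true, so cnt is eventually constant
  have hconst : ∀ s, cnt χ s ≤ cnt χ B := by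
    intro s
    induction s with
    | zero => exact cnt_mono χ (Nat.zero_le B)
    | succ n ih =>
      by_cases hn : n + 1 ≤ B
      · exact cnt_mono χ hn
      · have ht : χ (n+1) = true := by
          by_contra hc
          have : n+1 ∈ {n | χ n = false} := by simpa using Bool.eq_false_iff.mpr hc
          exact hn (hB this)
        rw [cnt_succ_of_true ht]; exact ih
  obtain ⟨s, hs⟩ := h (cnt χ B + 1)
  have := hconst s
  omega

/-- least `j` with `m ≤ cnt χ j`, found by recursion up to `k` (valid when witness `≤ k`). -/
def lf (χ : ℕ → Bool) (m : ℕ) : ℕ → ℕ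
  | 0 => 0
  | (k+1) => if m ≤ cnt χ (lf χ m k) then lf χ m k else k+1

lemma primrec_lf {χ : ℕ → Bool} (hχ : Primrec χ) : Primrec₂ (lf χ) := by
  have hc := primrec_cnt hχ
  have hstep : Primrec₂ (fun (p : ℕ × ℕ) (q : ℕ × ℕ) =>
      if p.1 ≤ cnt χ q.2 then q.2 else q.1 + 1) := by
    apply Primrec.ite
    · exact Primrec.nat_le.comp (Primrec.fst.comp Primrec.fst)
        (hc.comp (Primrec.snd.comp Primrec.snd))
    · exact Primrec.snd.comp Primrec.snd
    · exact Primrec.succ.comp (Primrec.fst.comp Primrec.snd)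
  have H := Primrec.nat_rec' (Primrec.snd : Primrec (fun p : ℕ × ℕ => p.2))
    (Primrec.const 0) hstep
  have key : ∀ m k, Nat.rec (motive := fun _ => ℕ) 0
      (fun k ih => if m ≤ cnt χ ih then ih else k + 1) k = lf χ m k := by
    intro m k
    induction k with
    | zero => rfl
    | succ k ih => simp only [lf, ih]
  exact H.of_eq (fun p => key p.1 p.2)

lemma lf_le (χ : ℕ → Bool) (m k : ℕ) : lf χ m k ≤ k := by
  induction k with
  | zero => exact Nat.le_refl 0
  | succ k ih =>
    simp only [lf]
    split
    · exact le_trans ih (Nat.le_succ k)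
    · exact Nat.le_refl _

lemma lf_spec {χ : ℕ → Bool} {m k : ℕ} (h : m ≤ cnt χ k) :
    m ≤ cnt χ (lf χ m k) ∧ ∀ j < lf χ m k, cnt χ j < m := by
  induction k with
  | zero => exact ⟨h, fun j hj => by simp [lf] at hj⟩
  | succ k ih =>
    by_cases hk : m ≤ cnt χ k
    · obtain ⟨h1, h2⟩ := ih hk
      simp only [lf, if_pos h1]
      exact ⟨h1, h2⟩
    · -- no witness ≤ k
      have hnw : ∀ j ≤ k, cnt χ j < m := fun j hj => by
        have := cnt_mono χ hj; omega
      have hlf : ¬ (m ≤ cnt χ (lf χ m k)) := by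
        have h1 : lf χ m k ≤ k := lf_le χ m k
        exact fun hc => hk (le_trans hc (cnt_mono χ h1))
      simp only [lf, if_neg hlf]
      exact ⟨h, fun j hj => hnw j (by omega)⟩

/-- the least witness is an element of the complement, if `m ≥ 1`. -/
lemma lf_false {χ : ℕ → Bool} {m k : ℕ} (hm : 1 ≤ m) (h : m ≤ cnt χ k) :
    χ (lf χ m k) = false := by
  obtain ⟨h1, h2⟩ := lf_spec (χ := χ) h
  cases hl : lf χ m k with
  | zero =>
    rw [hl] at h1
    by_contra hc
    have ht : χ 0 = true := by revert hc; cases χ 0 <;> simp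
    have : cnt χ 0 = 0 := by simp [cnt, ht]
    omega
  | succ n =>
    rw [hl] at h1 h2
    have hn := h2 n (Nat.lt_succ_self n)
    by_contra hc
    have ht : χ (n+1) = true := by revert hc; cases χ (n+1) <;> simp
    rw [cnt_succ_of_true ht] at h1
    omega

/-- least witnesses for distinct values `≥ 1` are distinct. -/
lemma lf_inj {χ : ℕ → Bool} {m₁ m₂ k₁ k₂ : ℕ} (h1 : 1 ≤ m₁) (h2 : 1 ≤ m₂)
    (hw1 : m₁ ≤ cnt χ k₁) (hw2 : m₂ ≤ cnt χ k₂)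
    (heq : lf χ m₁ k₁ = lf χ m₂ k₂) : m₁ = m₂ := by
  by_contra hne
  wlog hlt : m₁ < m₂ generalizing m₁ m₂ k₁ k₂
  · exact this h2 h1 hw2 hw1 heq.symm (Ne.symm hne) (by omega)
  obtain ⟨ha1, hb1⟩ := lf_spec (χ := χ) hw1
  obtain ⟨ha2, hb2⟩ := lf_spec (χ := χ) hw2
  -- lf m₂ k₂ can't be 0 since m₂ ≥ 2 > cnt χ 0
  cases hl : lf χ m₂ k₂ with
  | zero =>
    rw [hl] at ha2
    have := cnt_zero_le χ
    omega
  | succ t =>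
    rw [hl] at ha2 hb2
    have hct : cnt χ t < m₂ := hb2 t (Nat.lt_succ_self t)
    have hge : m₁ ≤ cnt χ t := by
      have := cnt_succ_le χ t
      omega
    -- so lf m₁ k₁ ≤ t < t+1 = lf m₂ k₂, contradicting heq
    have : ¬ (t < lf χ m₁ k₁) := fun hc => by have := hb1 t hc; omega
    rw [heq, hl] at this
    omega



/-- injectivity of the count on the complement. -/
lemma cnt_inj {χ : ℕ → Bool} {x y : ℕ} (hx : χ x = false) (hy : χ y = false)
    (h : cnt χ x = cnt χ y) : x = y := by
  rcases lt_trichotomy x y with hlt | heq | hgt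
  · have := cnt_lt_of_false hlt hy; omega
  · exact heq
  · have := cnt_lt_of_false hgt hx; omega

/-- The key reduction lemma: if the complement of `Z` is counted no faster
than the complement of `W`, then `REq Z` pr-reduces to `REq W`. -/
lemma reduction {χZ χW : ℕ → Bool} (hZ : Primrec χZ) (hW : Primrec χW)
    (h0 : χZ 0 = true) (hle : ∀ s, cnt χZ s ≤ cnt χW s) :
    PrRed (REq {n | χZ n = true}) (REq {n | χW n = true}) := by
  by_cases hP : ∃ p, χW p = true
  · obtain ⟨p, hp⟩ := hP
    refine ⟨fun k => bif χZ k then p else lf χW (cnt χZ k) k, ?_, ?_⟩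
    · exact Primrec.cond hZ (Primrec.const p)
        ((primrec_lf hW).comp (primrec_cnt hZ) Primrec.id)
    · intro x y
      constructor
      · rintro (⟨hx, hy⟩ | rfl)
        · simp only [Set.mem_setOf_eq] at hx hy
          simp only [hx, hy, cond_true]
          exact Or.inr rfl
        · exact Or.inr rfl
      · intro h
        cases hcx : χZ x <;> cases hcy : χZ y
        · -- both outside Z
          simp only [hcx, hcy, cond_false] at h
          have hwx : χW (lf χW (cnt χZ x) x) = false :=
            lf_false (cnt_pos_of_false hcx) (hle x)
          have hwy : χW (lf χW (cnt χZ y) y) = false :=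
            lf_false (cnt_pos_of_false hcy) (hle y)
          rcases h with ⟨h1, _⟩ | heq
          · simp only [Set.mem_setOf_eq] at h1; rw [hwx] at h1; exact absurd h1 (by simp)
          · right
            exact cnt_inj hcx hcy
              (lf_inj (cnt_pos_of_false hcx) (cnt_pos_of_false hcy) (hle x) (hle y) heq)
        · -- x outside, y inside: f x ∉ W, f y = p ∈ W
          simp only [hcx, hcy, cond_false, cond_true] at h
          have hwx : χW (lf χW (cnt χZ x) x) = false :=
            lf_false (cnt_pos_of_false hcx) (hle x)
          rcases h with ⟨h1, _⟩ | heq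
          · simp only [Set.mem_setOf_eq] at h1; rw [hwx] at h1; exact absurd h1 (by simp)
          · rw [heq, hp] at hwx; exact absurd hwx (by simp)
        · -- x inside, y outside
          simp only [hcx, hcy, cond_false, cond_true] at h
          have hwy : χW (lf χW (cnt χZ y) y) = false :=
            lf_false (cnt_pos_of_false hcy) (hle y)
          rcases h with ⟨_, h2⟩ | heq
          · simp only [Set.mem_setOf_eq] at h2; rw [hwy] at h2; exact absurd h2 (by simp)
          · rw [← heq, hp] at hwy; exact absurd hwy (by simp)
        · exact Or.inl ⟨hcx, hcy⟩
  · -- W is empty: REq W is equality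
    push_neg at hP
    have hPf : ∀ q, χW q = false := fun q => by
      have := hP q; revert this; cases χW q <;> simp
    refine ⟨fun k => bif χZ k then 0 else k, ?_, ?_⟩
    · exact Primrec.cond hZ (Primrec.const 0) Primrec.id
    · intro x y
      constructor
      · rintro (⟨hx, hy⟩ | rfl)
        · simp only [Set.mem_setOf_eq] at hx hy
          simp only [hx, hy, cond_true]
          exact Or.inr rfl
        · exact Or.inr rfl
      · intro h
        rcases h with ⟨h1, _⟩ | heq
        · simp only [Set.mem_setOf_eq, hPf] at h1; exact absurd h1 (by simp)
        · cases hcx : χZ x <;> cases hcy : χZ y <;>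
            simp only [hcx, hcy, cond_false, cond_true] at heq
          · exact Or.inr heq
          · rw [heq, h0] at hcx; exact absurd hcx (by simp)
          · rw [← heq, h0] at hcy; exact absurd hcy (by simp)
          · exact Or.inl ⟨hcx, hcy⟩

/-- the characteristic function of the infimum set `Z`. -/
def chiZ (χX χY : ℕ → Bool) : ℕ → Bool := fun s =>
  Nat.casesOn s true fun t =>
    decide (min (cnt χX (t+1)) (cnt χY (t+1)) ≤ min (cnt χX t) (cnt χY t))

lemma primrec_chiZ {χX χY : ℕ → Bool} (hX : Primrec χX) (hY : Primrec χY) :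
    Primrec (chiZ χX χY) := by
  apply Primrec.nat_casesOn₁
  exact PrimrecPred.decide <| Primrec.nat_le.comp
    (Primrec.nat_min.comp ((primrec_cnt hX).comp Primrec.succ)
      ((primrec_cnt hY).comp Primrec.succ))
    (Primrec.nat_min.comp (primrec_cnt hX) (primrec_cnt hY))

lemma cnt_chiZ (χX χY : ℕ → Bool) (s : ℕ) :
    cnt (chiZ χX χY) s + min (cnt χX 0) (cnt χY 0) = min (cnt χX s) (cnt χY s) := by
  induction s with
  | zero => simp [cnt, chiZ]
  | succ s ih =>
    have hx1 := cnt_succ_le χX s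
    have hx2 := cnt_mono χX (show s ≤ s + 1 by omega)
    have hy1 := cnt_succ_le χY s
    have hy2 := cnt_mono χY (show s ≤ s + 1 by omega)
    by_cases hd : min (cnt χX (s+1)) (cnt χY (s+1)) ≤ min (cnt χX s) (cnt χY s)
    · have ht : chiZ χX χY (s+1) = true := by simp [chiZ, hd]
      rw [cnt_succ_of_true ht, ih]
      omega
    · have ht : chiZ χX χY (s+1) = false := by simp [chiZ, hd]
      rw [cnt_succ_of_false ht]
      omega


end S11

theorem stmt_11 (X Y : Set ℕ) (hX : PRSet X) (hY : PRSet Y)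
    (hXc : Xᶜ.Infinite) (hYc : Yᶜ.Infinite) :
    ∃ Z : Set ℕ, PRSet Z ∧ Zᶜ.Infinite ∧
      PrRed (REq Z) (REq X) ∧ PrRed (REq Z) (REq Y) := by
  classical
  obtain ⟨χX, hχX, hmX⟩ := hX
  obtain ⟨χY, hχY, hmY⟩ := hY
  have hXeq : X = {n | χX n = true} := Set.ext fun n => hmX n
  have hYeq : Y = {n | χY n = true} := Set.ext fun n => hmY n
  set χZ := S11.chiZ χX χY with hχZdef
  have hprZ : Primrec χZ := S11.primrec_chiZ hχX hχY
  have h0 : χZ 0 = true := rfl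
  have hkey : ∀ s, S11.cnt χZ s + min (S11.cnt χX 0) (S11.cnt χY 0)
      = min (S11.cnt χX s) (S11.cnt χY s) := S11.cnt_chiZ χX χY
  have hleX : ∀ s, S11.cnt χZ s ≤ S11.cnt χX s := fun s => by
    have := hkey s; omega
  have hleY : ∀ s, S11.cnt χZ s ≤ S11.cnt χY s := fun s => by
    have := hkey s; omega
  refine ⟨{n | χZ n = true}, ⟨χZ, hprZ, fun n => Iff.rfl⟩, ?_, ?_, ?_⟩
  · -- complement infinite
    have hcompl : {n | χZ n = true}ᶜ = {n | χZ n = false} := by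
      ext n; simp [Bool.not_eq_true]
    rw [hcompl]
    apply S11.infinite_of_cnt_unbounded
    intro N
    have hXinf : {n | χX n = false}.Infinite := by
      have : Xᶜ = {n | χX n = false} := by
        ext n
        simp only [Set.mem_compl_iff, hXeq, Set.mem_setOf_eq, Bool.not_eq_true]
      rwa [this] at hXc
    have hYinf : {n | χY n = false}.Infinite := by
      have : Yᶜ = {n | χY n = false} := by
        ext n
        simp only [Set.mem_compl_iff, hYeq, Set.mem_setOf_eq, Bool.not_eq_true]
      rwa [this] at hYc
    obtain ⟨s1, h1⟩ := S11.cnt_unbounded hXinf (N + min (S11.cnt χX 0) (S11.cnt χY 0))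
    obtain ⟨s2, h2⟩ := S11.cnt_unbounded hYinf (N + min (S11.cnt χX 0) (S11.cnt χY 0))
    refine ⟨max s1 s2, ?_⟩
    have hk := hkey (max s1 s2)
    have m1 := S11.cnt_mono χX (le_max_left s1 s2)
    have m2 := S11.cnt_mono χY (le_max_right s1 s2)
    omega
  · rw [hXeq]
    exact S11.reduction hprZ hχX h0 hleX
  · rw [hYeq]
    exact S11.reduction hprZ hχY h0 hleY
end
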